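/- arXiv:2512.03396 — 4 statements merged into one kernel-verified Lean document; each statement's English description precedes it below -/
import Mathlib

section
/- Let (Ω, F) be a measurable space and let 𝔇 be a map assigning to every bounded measurable X : Ω → ℝ a distribution 𝔇(X). Then the following are equivalent. (a) 𝔇 satisfies: (R1) if X ≥ Y pointwise then 𝔇(X) ≥_fsd 𝔇(Y); (R2) for every uniformly bounded sequence (Xₙ) of bounded measurable functions converging pointwise to a bounded measurable X, the measures 𝔇(Xₙ) converge weakly to 𝔇(X); (R3) for every strictly increasing continuous u : ℝ → ℝ and every bounded measurable X, 𝔇(u ∘ X) equals the pushforward of 𝔇(X) under u. (b) There exists a continuous capacity ν on (Ω, F) such that 𝔇(X)((x, ∞)) = ν({X > x}) for all bounded measurable X and all x ∈ ℝ. -/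
open MeasureTheory Filter Topology

noncomputable section

/-- Bounded measurable real-valued functions with respect to the σ-algebra `m`. -/
def BddMeas {Ω : Type*} (m : MeasurableSpace Ω) (X : Ω → ℝ) : Prop :=
  @Measurable Ω ℝ m _ X ∧ ∃ M : ℝ, ∀ ω, |X ω| ≤ M

/-- A capacity on a measurable space. -/
def IsCapacity {Ω : Type*} (m : MeasurableSpace Ω) (ν : Set Ω → ℝ) : Prop :=
  ν ∅ = 0 ∧ ν Set.univ = 1 ∧
    ∀ A B : Set Ω, @MeasurableSet Ω m A → @MeasurableSet Ω m B → A ⊆ B → ν A ≤ ν B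

/-- A continuous capacity: continuous along increasing and decreasing sequences. -/
def IsContinuousCapacity {Ω : Type*} (m : MeasurableSpace Ω) (ν : Set Ω → ℝ) : Prop :=
  IsCapacity m ν ∧
    (∀ A : ℕ → Set Ω, (∀ n, @MeasurableSet Ω m (A n)) → Monotone A →
      Filter.Tendsto (fun n => ν (A n)) Filter.atTop (nhds (ν (⋃ n, A n)))) ∧
    (∀ A : ℕ → Set Ω, (∀ n, @MeasurableSet Ω m (A n)) → Antitone A →
      Filter.Tendsto (fun n => ν (A n)) Filter.atTop (nhds (ν (⋂ n, A n))))

/-- Supermodularity of a capacity. -/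
def Supermodular {Ω : Type*} (m : MeasurableSpace Ω) (ν : Set Ω → ℝ) : Prop :=
  ∀ A B : Set Ω, @MeasurableSet Ω m A → @MeasurableSet Ω m B →
    ν A + ν B ≤ ν (A ∪ B) + ν (A ∩ B)

/-- A distribution: a compactly supported Borel probability measure on ℝ. -/
def IsDistribution (Q : Measure ℝ) : Prop :=
  IsProbabilityMeasure Q ∧ ∃ a b : ℝ, Q (Set.Icc a b) = 1

/-- `FSDle P Q` means `Q ≥_fsd P` (first-order stochastic dominance). -/
def FSDle (P Q : Measure ℝ) : Prop := ∀ x : ℝ, P (Set.Ioi x) ≤ Q (Set.Ioi x)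

/-- Weak convergence of a sequence of Borel measures on ℝ. -/
def WeakConv (Qn : ℕ → Measure ℝ) (Q : Measure ℝ) : Prop :=
  ∀ f : BoundedContinuousFunction ℝ ℝ,
    Filter.Tendsto (fun n => ∫ x, f x ∂(Qn n)) Filter.atTop (nhds (∫ x, f x ∂Q))

/-- A statistic: strictly fsd-monotone and compactly continuous functional on distributions. -/
def IsStatistic (γ : Measure ℝ → ℝ) : Prop :=
  (∀ Q P : Measure ℝ, IsDistribution Q → IsDistribution P → FSDle P Q → γ P ≤ γ Q) ∧
  (∀ Q P : Measure ℝ, IsDistribution Q → IsDistribution P → FSDle P Q → Q ≠ P → γ P < γ Q) ∧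
  (∀ (Qn : ℕ → Measure ℝ) (Q : Measure ℝ), (∀ n, IsDistribution (Qn n)) → IsDistribution Q →
    (∃ a b : ℝ, ∀ n, Qn n (Set.Icc a b) = 1) → WeakConv Qn Q →
    Filter.Tendsto (fun n => γ (Qn n)) Filter.atTop (nhds (γ Q)))

/-- A certainty-equivalent statistic. -/
def IsCEStatistic (γ : Measure ℝ → ℝ) : Prop :=
  IsStatistic γ ∧ ∀ c : ℝ, γ (MeasureTheory.Measure.dirac c) = c

/-- `D` is the Choquet act-to-distribution mapping associated with the capacity `ν`. -/
def IsChoquetATD {Ω : Type*} (m : MeasurableSpace Ω) (ν : Set Ω → ℝ)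
    (D : (Ω → ℝ) → Measure ℝ) : Prop :=
  ∀ X : Ω → ℝ, BddMeas m X →
    IsDistribution (D X) ∧ ∀ x : ℝ, (D X (Set.Ioi x)).toReal = ν {ω | x < X ω}

/-- The ν-quantile of `X` at level `α`. -/
def capQuantile {Ω : Type*} (ν : Set Ω → ℝ) (X : Ω → ℝ) (α : ℝ) : ℝ :=
  sInf {x : ℝ | ν {ω | x < X ω} < 1 - α}

/-- The quantile function of a distribution. -/
def distQuantile (Q : Measure ℝ) (α : ℝ) : ℝ :=
  sInf {x : ℝ | (Q (Set.Ioi x)).toReal < 1 - α}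

/-- Comonotonic pairs of functions. -/
def Comonotonic {Ω : Type*} (X Y : Ω → ℝ) : Prop :=
  ∀ s s' : Ω, 0 ≤ (X s - X s') * (Y s - Y s')

/-- Real-valued indicator function of a set. -/
def ind {Ω : Type*} (A : Set Ω) : Ω → ℝ := A.indicator fun _ => 1

/-- Atomlessness of `P` in the sense of the paper. -/
def AtomlessOn {Ω : Type*} (G : MeasurableSpace Ω) (P : @Measure Ω G) : Prop :=
  ∀ A : Set Ω, @MeasurableSet Ω G A → ∀ r : ENNReal, r ≤ P A →
    ∃ B : Set Ω, @MeasurableSet Ω G B ∧ B ⊆ A ∧ P B = r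

/-- A capacity is risk conforming if it coincides with `P` on `G`. -/
def RiskConforming {Ω : Type*} (G : MeasurableSpace Ω) (P : @Measure Ω G)
    (ν : Set Ω → ℝ) : Prop :=
  ∀ A : Set Ω, @MeasurableSet Ω G A → ν A = (P A).toReal

/-- A preference relation: a total preorder on the bounded `m`-measurable functions. -/
def TotalPreorderOn {Ω : Type*} (m : MeasurableSpace Ω)
    (pref : (Ω → ℝ) → (Ω → ℝ) → Prop) : Prop :=
  (∀ X Y, BddMeas m X → BddMeas m Y → pref X Y ∨ pref Y X) ∧
  (∀ X Y Z, BddMeas m X → BddMeas m Y → BddMeas m Z → pref X Y → pref Y Z → pref X Z)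

/-- Axiom (M): monotonicity. -/
def AxiomM {Ω : Type*} (m : MeasurableSpace Ω) (pref : (Ω → ℝ) → (Ω → ℝ) → Prop) : Prop :=
  ∀ X Y, BddMeas m X → BddMeas m Y → (∀ ω, Y ω ≤ X ω) → pref X Y

/-- Axiom (RC): risk conformity. -/
def AxiomRC {Ω : Type*} (G : MeasurableSpace Ω) (P : @Measure Ω G)
    (pref : (Ω → ℝ) → (Ω → ℝ) → Prop) : Prop :=
  ∀ X Y, BddMeas G X → BddMeas G Y →
    (∀ x : ℝ, P {ω | x < X ω} = P {ω | x < Y ω}) → pref X Y ∧ pref Y X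

/-- Axiom (SRM): strict risk monotonicity. -/
def AxiomSRM {Ω : Type*} (G : MeasurableSpace Ω) (P : @Measure Ω G)
    (pref : (Ω → ℝ) → (Ω → ℝ) → Prop) : Prop :=
  ∀ X Y, BddMeas G X → BddMeas G Y →
    P {ω | Y ω ≤ X ω} = 1 → 0 < P {ω | Y ω < X ω} → pref X Y ∧ ¬ pref Y X

/-- Axiom (C): continuity (B-closedness of upper and lower contour sets). -/
def AxiomC {Ω : Type*} (m : MeasurableSpace Ω) (pref : (Ω → ℝ) → (Ω → ℝ) → Prop) : Prop :=
  ∀ X, BddMeas m X → ∀ (Yn : ℕ → Ω → ℝ) (Y : Ω → ℝ),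
    (∀ n, BddMeas m (Yn n)) → BddMeas m Y →
    (∃ M : ℝ, ∀ n ω, |Yn n ω| ≤ M) →
    (∀ ω, Filter.Tendsto (fun n => Yn n ω) Filter.atTop (nhds (Y ω))) →
    ((∀ n, pref X (Yn n)) → pref X Y) ∧ ((∀ n, pref (Yn n) X) → pref Y X)

/-- Axiom (CD): cumulative dominance. -/
def AxiomCD {Ω : Type*} (m : MeasurableSpace Ω) (pref : (Ω → ℝ) → (Ω → ℝ) → Prop) : Prop :=
  ∀ X Y, BddMeas m X → BddMeas m Y →
    (∀ x : ℝ, pref (ind {ω | x < X ω}) (ind {ω | x < Y ω}) ∧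
       pref (ind {ω | x < Y ω}) (ind {ω | x < X ω})) →
    pref X Y ∧ pref Y X

/-- `SSDle P Q` means `Q ≥_ssd P` (second-order stochastic dominance). -/
def SSDle (P Q : Measure ℝ) : Prop :=
  ∀ f : ℝ → ℝ, Monotone f → ConcaveOn ℝ Set.univ f → ∫ x, f x ∂P ≤ ∫ x, f x ∂Q

/-- Comonotonic quasiconcavity of a statistic. -/
def ComonotonicQuasiconcave (γ : Measure ℝ → ℝ) : Prop :=
  ∀ Q P R : Measure ℝ, IsDistribution Q → IsDistribution P → IsDistribution R →
    ∀ l : ℝ, 0 ≤ l → l ≤ 1 →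
    (∀ β : ℝ, 0 < β → β < 1 →
      distQuantile R β = l * distQuantile Q β + (1 - l) * distQuantile P β) →
    min (γ Q) (γ P) ≤ γ R

/-- Exactness of a capacity. -/
def ExactCapacity {Ω : Type*} (m : MeasurableSpace Ω) (ν : Set Ω → ℝ) : Prop :=
  ∀ A : Set Ω, @MeasurableSet Ω m A →
    ∃ μ : @Measure Ω m, @IsProbabilityMeasure Ω m μ ∧
      (∀ B : Set Ω, @MeasurableSet Ω m B → ν B ≤ (μ B).toReal) ∧ (μ A).toReal = ν A

namespace Stmt0Aux

open Set

variable {Ω : Type*}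

lemma ind_mem {A : Set Ω} {ω : Ω} (h : ω ∈ A) : ind A ω = 1 := by
  simp [ind, h]

lemma ind_not_mem {A : Set Ω} {ω : Ω} (h : ω ∉ A) : ind A ω = 0 := by
  simp [ind, h]

lemma bddMeas_ind {m : MeasurableSpace Ω} {A : Set Ω} (hA : MeasurableSet A) :
    BddMeas m (ind A) := by
  refine ⟨(measurable_const (a := (1:ℝ))).indicator hA, 1, fun ω => ?_⟩
  by_cases h : ω ∈ A
  · rw [ind_mem h]; norm_num
  · rw [ind_not_mem h]; norm_num

lemma bddMeas_comp {m : MeasurableSpace Ω} {X : Ω → ℝ} (hX : BddMeas m X)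
    {u : ℝ → ℝ} (hu : Continuous u) : BddMeas m (fun ω => u (X ω)) := by
  obtain ⟨hXm, M, hM⟩ := hX
  obtain ⟨C, hC⟩ := (isCompact_Icc (a := -M) (b := M)).exists_bound_of_continuousOn
    hu.continuousOn
  refine ⟨hu.measurable.comp hXm, C, fun ω => ?_⟩
  have := hC (X ω) (by have := hM ω; rw [abs_le] at this; exact ⟨this.1, this.2⟩)
  simpa using this

lemma preimage_Ioi {u : ℝ → ℝ} (hu : StrictMono u) {c x : ℝ} (h : u c = x) :
    u ⁻¹' Set.Ioi x = Set.Ioi c := by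
  ext t
  simp only [mem_preimage, mem_Ioi, ← h, hu.lt_iff_lt]

lemma ext_survival {μ ρ : Measure ℝ} [IsProbabilityMeasure μ] [IsProbabilityMeasure ρ]
    (h : ∀ x : ℝ, μ (Set.Ioi x) = ρ (Set.Ioi x)) : μ = ρ := by
  refine MeasureTheory.Measure.ext_of_Ioc_finite μ ρ (by simp) fun a b hab => ?_
  have hd : Set.Ioc a b = Set.Ioi a \ Set.Ioi b := by
    ext t
    simp only [mem_Ioc, mem_diff, mem_Ioi, not_lt]
  rw [hd, measure_diff (Set.Ioi_subset_Ioi hab.le) measurableSet_Ioi.nullMeasurableSet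
    (measure_ne_top μ _), measure_diff (Set.Ioi_subset_Ioi hab.le)
    measurableSet_Ioi.nullMeasurableSet (measure_ne_top ρ _), h a, h b]

lemma toReal_Ioc {μ : Measure ℝ} [IsProbabilityMeasure μ] {a b : ℝ} (hab : a ≤ b) :
    (μ (Set.Ioc a b)).toReal = (μ (Set.Ioi a)).toReal - (μ (Set.Ioi b)).toReal := by
  have hu : Set.Ioc a b ∪ Set.Ioi b = Set.Ioi a := Set.Ioc_union_Ioi_eq_Ioi hab
  have hdis : Disjoint (Set.Ioc a b) (Set.Ioi b) := by
    apply Set.disjoint_left.mpr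
    intro t ht ht'
    exact absurd ht.2 (not_le.mpr ht')
  have := measure_union (μ := μ) hdis measurableSet_Ioi
  rw [hu] at this
  rw [this, ENNReal.toReal_add (measure_ne_top _ _) (measure_ne_top _ _)]
  ring

lemma toReal_union {μ : Measure ℝ} [IsProbabilityMeasure μ] {s t : Set ℝ}
    (ht : MeasurableSet t) :
    (μ (s ∪ t)).toReal = (μ s).toReal + (μ t).toReal - (μ (s ∩ t)).toReal := by
  have := measure_union_add_inter (μ := μ) s ht
  have h2 := congrArg ENNReal.toReal this
  rw [ENNReal.toReal_add (measure_ne_top _ _) (measure_ne_top _ _),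
    ENNReal.toReal_add (measure_ne_top _ _) (measure_ne_top _ _)] at h2
  linarith

lemma conv_at_half {Qn : ℕ → Measure ℝ} {Q : Measure ℝ}
    (hQn : ∀ n, IsProbabilityMeasure (Qn n)) (hQ : IsProbabilityMeasure Q)
    (hw : WeakConv Qn Q) (h0 : Q {(1:ℝ)/2} = 0) :
    Filter.Tendsto (fun n => Qn n (Set.Ioi ((1:ℝ)/2))) Filter.atTop
      (nhds (Q (Set.Ioi ((1:ℝ)/2)))) := by
  let P : MeasureTheory.ProbabilityMeasure ℝ := ⟨Q, hQ⟩
  let Pn : ℕ → MeasureTheory.ProbabilityMeasure ℝ := fun n => ⟨Qn n, hQn n⟩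
  have hten : Filter.Tendsto Pn Filter.atTop (nhds P) :=
    MeasureTheory.ProbabilityMeasure.tendsto_iff_forall_integral_tendsto.mpr fun f => hw f
  exact MeasureTheory.ProbabilityMeasure.tendsto_measure_of_null_frontier_of_tendsto' hten
    (E := Set.Ioi ((1:ℝ)/2)) (by rw [frontier_Ioi]; exact h0)

section Forward

open Filter

variable {Ω : Type*} {F : MeasurableSpace Ω} {D : (Ω → ℝ) → Measure ℝ}

lemma atom_half (hD : ∀ X : Ω → ℝ, BddMeas F X → IsDistribution (D X))
    (R3 : ∀ u : ℝ → ℝ, StrictMono u → Continuous u → ∀ X : Ω → ℝ, BddMeas F X →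
      D (fun ω => u (X ω)) = Measure.map u (D X))
    {A : Set Ω} (hA : MeasurableSet A) : D (ind A) {(1:ℝ)/2} = 0 := by
  haveI : IsProbabilityMeasure (D (ind A)) := (hD (ind A) (bddMeas_ind hA)).1
  set u : ℝ → ℝ := fun t => max (t/3) (3*t - 2) with hu
  have humono : StrictMono u := by
    intro a b h
    exact max_lt_max (by linarith) (by linarith)
  have hucont : Continuous u := by
    apply Continuous.max <;> continuity
  have hcomp : (fun ω => u (ind A ω)) = ind A := by
    funext ω
    by_cases h : ω ∈ A
    · rw [ind_mem h, hu]; norm_num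
    · rw [ind_not_mem h, hu]; norm_num
  have hmap : D (ind A) = Measure.map u (D (ind A)) := by
    conv_lhs => rw [← hcomp]
    exact R3 u humono hucont (ind A) (bddMeas_ind hA)
  have hval : u (3/4 : ℝ) = 1/4 := by rw [hu]; norm_num
  have h34 : D (ind A) (Set.Ioi (1/4 : ℝ)) = D (ind A) (Set.Ioi (3/4 : ℝ)) := by
    conv_lhs => rw [hmap]
    rw [Measure.map_apply hucont.measurable measurableSet_Ioi, preimage_Ioi humono hval]
  have hsub : ({(1:ℝ)/2} : Set ℝ) ⊆ Set.Ioi (1/4:ℝ) \ Set.Ioi (3/4:ℝ) := by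
    intro t ht
    rw [Set.mem_singleton_iff] at ht
    subst ht
    constructor
    · norm_num
    · norm_num
  refine le_antisymm ?_ zero_le
  calc D (ind A) {(1:ℝ)/2} ≤ D (ind A) (Set.Ioi (1/4:ℝ) \ Set.Ioi (3/4:ℝ)) :=
        measure_mono hsub
    _ = D (ind A) (Set.Ioi (1/4:ℝ)) - D (ind A) (Set.Ioi (3/4:ℝ)) :=
        measure_diff (Set.Ioi_subset_Ioi (by norm_num))
          measurableSet_Ioi.nullMeasurableSet (measure_ne_top _ _)
    _ = 0 := by rw [h34, tsub_self]

lemma keyId (hD : ∀ X : Ω → ℝ, BddMeas F X → IsDistribution (D X))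
    (R2 : ∀ (Xn : ℕ → Ω → ℝ) (X : Ω → ℝ), (∀ n, BddMeas F (Xn n)) → BddMeas F X →
        (∃ M : ℝ, ∀ n ω, |Xn n ω| ≤ M) →
        (∀ ω, Filter.Tendsto (fun n => Xn n ω) Filter.atTop (nhds (X ω))) →
        WeakConv (fun n => D (Xn n)) (D X))
    (R3 : ∀ u : ℝ → ℝ, StrictMono u → Continuous u → ∀ X : Ω → ℝ, BddMeas F X →
      D (fun ω => u (X ω)) = Measure.map u (D X))
    {X : Ω → ℝ} (hX : BddMeas F X) (x : ℝ) :
    D X (Set.Ioi x) = D (ind {ω | x < X ω}) (Set.Ioi ((1:ℝ)/2)) := by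
  obtain ⟨hXm, M, hM⟩ := hX
  have hX : BddMeas F X := ⟨hXm, M, hM⟩
  set A : Set Ω := {ω | x < X ω} with hA
  have hAm : MeasurableSet A := hXm measurableSet_Ioi
  set c : ℕ → ℝ := fun n => (n+1 : ℝ) with hc
  have hcpos : ∀ n, (0:ℝ) < c n := fun n => by positivity
  have hcge : ∀ n, (1:ℝ) ≤ c n := fun n => by
    rw [hc]; push_cast; linarith [Nat.cast_nonneg (α := ℝ) n]
  set u : ℕ → ℝ → ℝ := fun n t => max 0 (min 1 (c n * (t - x))) + (t - x)/(c n) with hudef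
  have humono : ∀ n, StrictMono (u n) := by
    intro n a b hab
    have h1 : max 0 (min 1 (c n * (a - x))) ≤ max 0 (min 1 (c n * (b - x))) := by
      apply max_le_max le_rfl
      apply min_le_min le_rfl
      nlinarith [hcpos n]
    have h2 : (a - x)/(c n) < (b - x)/(c n) := by
      gcongr
      all_goals first | exact hcpos n | linarith
    exact add_lt_add_of_le_of_lt h1 h2
  have hucont : ∀ n, Continuous (u n) := by
    intro n
    exact (continuous_const.max (continuous_const.min
      (continuous_const.mul (continuous_id.sub continuous_const)))).add
      ((continuous_id.sub continuous_const).div_const _)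
  -- bdd meas of each approximant
  have hb : ∀ n, BddMeas F (fun ω => u n (X ω)) :=
    fun n => bddMeas_comp ⟨hXm, M, hM⟩ (hucont n)
  -- uniform bound
  have hub : ∃ M', ∀ n ω, |u n (X ω)| ≤ M' := by
    refine ⟨1 + (M + |x|), fun n ω => ?_⟩
    have hx1 : |max 0 (min 1 (c n * (X ω - x)))| ≤ 1 := by
      rw [abs_le]
      constructor
      · have := le_max_left (0:ℝ) (min 1 (c n * (X ω - x))); linarith
      · apply max_le (by norm_num)
        exact le_trans (min_le_left _ _) le_rfl
    have hx2 : |(X ω - x)/(c n)| ≤ M + |x| := by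
      rw [abs_div]
      have h1 : |X ω - x| ≤ M + |x| :=
        le_trans (abs_sub _ _) (add_le_add (hM ω) le_rfl)
      have h2 : (1:ℝ) ≤ |c n| := by rw [abs_of_pos (hcpos n)]; exact hcge n
      calc |X ω - x| / |c n| ≤ |X ω - x| / 1 :=
            div_le_div_of_nonneg_left (abs_nonneg _) one_pos h2
          _ = |X ω - x| := by ring
          _ ≤ M + |x| := h1
    calc |u n (X ω)| ≤ |max 0 (min 1 (c n * (X ω - x)))| + |(X ω - x)/(c n)| := abs_add_le _ _
      _ ≤ 1 + (M + |x|) := add_le_add hx1 hx2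
  -- pointwise limit
  have hdiv : Filter.Tendsto (fun n : ℕ => 1/(c n)) Filter.atTop (nhds 0) := by
    rw [hc]
    exact_mod_cast (tendsto_one_div_add_atTop_nhds_zero_nat (𝕜 := ℝ))
  have hlim : ∀ ω, Filter.Tendsto (fun n => u n (X ω)) Filter.atTop (nhds (ind A ω)) := by
    intro ω
    have hfrac : Filter.Tendsto (fun n : ℕ => (X ω - x)/(c n)) Filter.atTop (nhds 0) := by
      have := hdiv.const_mul (X ω - x)
      simp only [mul_zero] at this
      convert this using 2 with n
      field_simp
    rcases le_or_gt (X ω) x with hle | hlt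
    · -- X ω ≤ x : limit 0
      rw [ind_not_mem (by simp only [hA, Set.mem_setOf_eq, not_lt]; exact hle)]
      have heq : ∀ n, u n (X ω) = (X ω - x)/(c n) := by
        intro n
        have h1 : c n * (X ω - x) ≤ 0 := by nlinarith [hcpos n]
        rw [hudef]
        dsimp only
        rw [min_eq_right (le_trans h1 zero_le_one), max_eq_left h1, zero_add]
      exact Filter.Tendsto.congr (fun n => (heq n).symm) hfrac
    · -- x < X ω : limit 1
      rw [ind_mem (by simpa only [hA, Set.mem_setOf_eq] using hlt)]
      have hev : ∀ᶠ n in Filter.atTop, u n (X ω) = 1 + (X ω - x)/(c n) := by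
        obtain ⟨N, hN⟩ := exists_nat_ge (1/(X ω - x))
        filter_upwards [Filter.eventually_ge_atTop N] with n hn
        have h1 : 1 ≤ c n * (X ω - x) := by
          have hcN : (1/(X ω - x)) ≤ c n := by
            calc (1/(X ω - x)) ≤ (N:ℝ) := hN
              _ ≤ (n:ℝ) := by exact_mod_cast hn
              _ ≤ c n := by rw [hc]; dsimp; linarith
          have hposd : 0 < X ω - x := sub_pos.mpr hlt
          have hmm := mul_le_mul_of_nonneg_right hcN hposd.le
          rw [one_div, inv_mul_cancel₀ hposd.ne'] at hmm
          exact hmm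
        rw [hudef]
        dsimp only
        rw [min_eq_left h1, max_eq_right zero_le_one]
      have h2 : Filter.Tendsto (fun n : ℕ => 1 + (X ω - x)/(c n)) Filter.atTop (nhds 1) := by
        have := hfrac.const_add 1
        simpa using this
      exact Filter.Tendsto.congr' (Filter.EventuallyEq.symm hev) h2
  -- weak convergence
  have hw : WeakConv (fun n => D (fun ω => u n (X ω))) (D (ind A)) :=
    R2 _ _ hb (bddMeas_ind hAm) hub hlim
  have h1 : Filter.Tendsto (fun n => D (fun ω => u n (X ω)) (Set.Ioi ((1:ℝ)/2)))
      Filter.atTop (nhds (D (ind A) (Set.Ioi ((1:ℝ)/2)))) :=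
    conv_at_half (fun n => (hD _ (hb n)).1) (hD _ (bddMeas_ind hAm)).1 hw
      (atom_half hD R3 hAm)
  -- the crossing points
  set t' : ℕ → ℝ := fun n => x + c n / (2*((c n)^2+1)) with ht'
  have hut : ∀ n, u n (t' n) = 1/2 := by
    intro n
    have hcn := hcpos n
    have hd : t' n - x = c n / (2*((c n)^2+1)) := by rw [ht']; ring
    have h1 : c n * (t' n - x) = (c n)^2 / (2*((c n)^2+1)) := by
      rw [hd]; field_simp
    have hle1 : (c n)^2 / (2*((c n)^2+1)) ≤ 1 := by
      rw [div_le_one (by positivity)]; nlinarith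
    have hge0 : (0:ℝ) ≤ (c n)^2 / (2*((c n)^2+1)) := by positivity
    rw [hudef]
    dsimp only
    rw [h1, min_eq_right hle1, max_eq_right hge0, hd]
    field_simp
  have hpre : ∀ n, (u n) ⁻¹' (Set.Ioi ((1:ℝ)/2)) = Set.Ioi (t' n) :=
    fun n => preimage_Ioi (humono n) (hut n)
  have h2 : ∀ n, D (fun ω => u n (X ω)) (Set.Ioi ((1:ℝ)/2)) = D X (Set.Ioi (t' n)) := by
    intro n
    rw [R3 (u n) (humono n) (hucont n) X hX,
      Measure.map_apply (hucont n).measurable measurableSet_Ioi, hpre n]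
  -- monotone union
  have hmono : Monotone (fun n => Set.Ioi (t' n)) := by
    have key : ∀ a b : ℝ, 1 ≤ a → a ≤ b → b/(2*(b^2+1)) ≤ a/(2*(a^2+1)) := by
      intro a b ha hab
      rw [div_le_div_iff₀ (by positivity) (by positivity)]
      nlinarith [mul_nonneg (sub_nonneg.2 hab) (sub_nonneg.2
        (show (1:ℝ) ≤ a*b by nlinarith))]
    intro n m hnm t ht
    have hcle : c n ≤ c m := by
      have : (n:ℝ) ≤ m := Nat.cast_le.mpr hnm
      simp only [hc]; linarith
    have := key (c n) (c m) (hcge n) hcle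
    simp only [Set.mem_Ioi] at ht ⊢
    rw [ht']
    dsimp only
    rw [ht'] at ht
    dsimp only at ht
    linarith
  have hUnion : (⋃ n, Set.Ioi (t' n)) = Set.Ioi x := by
    ext t
    simp only [Set.mem_iUnion, Set.mem_Ioi]
    constructor
    · rintro ⟨n, hn⟩
      have : 0 < c n / (2*((c n)^2+1)) := by positivity
      rw [ht'] at hn; dsimp only at hn
      linarith
    · intro ht
      obtain ⟨n, hn⟩ := exists_nat_one_div_lt (sub_pos.mpr ht)
      refine ⟨n, ?_⟩
      have hdle : c n / (2*((c n)^2+1)) ≤ 1/(c n) := by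
        rw [div_le_div_iff₀ (by positivity) (hcpos n)]
        nlinarith [hcpos n]
      have h1cn : (1:ℝ)/(c n) = 1/(n+1 : ℝ) := by rw [hc]
      rw [ht']; dsimp only
      have := hdle.trans_lt (h1cn ▸ hn)
      linarith
  have h3 : Filter.Tendsto (fun n => D X (Set.Ioi (t' n))) Filter.atTop
      (nhds (D X (Set.Ioi x))) := by
    have := tendsto_measure_iUnion_atTop (μ := D X) hmono
    rw [hUnion] at this
    exact this
  have h1' : Filter.Tendsto (fun n => D X (Set.Ioi (t' n))) Filter.atTop
      (nhds (D (ind A) (Set.Ioi ((1:ℝ)/2)))) :=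
    Filter.Tendsto.congr (fun n => h2 n) h1
  exact tendsto_nhds_unique h3 h1'

end Forward
section Forward2

open Filter

variable {Ω : Type*} {F : MeasurableSpace Ω} {D : (Ω → ℝ) → Measure ℝ}

lemma nu_empty (hD : ∀ X : Ω → ℝ, BddMeas F X → IsDistribution (D X))
    (R3 : ∀ u : ℝ → ℝ, StrictMono u → Continuous u → ∀ X : Ω → ℝ, BddMeas F X →
      D (fun ω => u (X ω)) = Measure.map u (D X)) :
    D (ind (∅ : Set Ω)) (Set.Ioi ((1:ℝ)/2)) = 0 := by
  have hind : ind (∅ : Set Ω) = fun _ => (0:ℝ) :=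
    funext fun ω => ind_not_mem (Set.notMem_empty ω)
  have hbm : BddMeas F (ind (∅ : Set Ω)) := bddMeas_ind MeasurableSet.empty
  haveI hprob : IsProbabilityMeasure (D (ind (∅ : Set Ω))) := (hD _ hbm).1
  obtain ⟨_, a, b, hab⟩ := hD _ hbm
  set cc : ℝ := max b 1 with hcc
  have hc0 : (0:ℝ) < cc := lt_of_lt_of_le one_pos (le_max_right _ _)
  set u : ℝ → ℝ := fun t => t/(2*cc) with hu
  have humono : StrictMono u := by
    intro s t hst
    rw [hu]; dsimp only
    gcongr
    all_goals first | positivity | linarith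
  have hucont : Continuous u := continuous_id.div_const _
  have hcomp : (fun ω => u (ind (∅ : Set Ω) ω)) = ind (∅ : Set Ω) := by
    funext ω
    rw [hind]
    simp [hu]
  have hmap : D (ind (∅ : Set Ω)) = Measure.map u (D (ind (∅ : Set Ω))) := by
    conv_lhs => rw [← hcomp]
    exact R3 u humono hucont _ hbm
  have hval : u cc = 1/2 := by
    rw [hu]; dsimp only
    rw [div_eq_div_iff (by positivity) (by norm_num : (2:ℝ) ≠ 0)]
    ring
  have h1 : D (ind (∅ : Set Ω)) (Set.Ioi ((1:ℝ)/2)) = D (ind (∅ : Set Ω)) (Set.Ioi cc) := by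
    conv_lhs => rw [hmap]
    rw [Measure.map_apply hucont.measurable measurableSet_Ioi, preimage_Ioi humono hval]
  have hcompl : D (ind (∅ : Set Ω)) (Set.Icc a b)ᶜ = 0 := by
    rw [measure_compl measurableSet_Icc (measure_ne_top _ _), hab, measure_univ, tsub_self]
  have hsub : Set.Ioi cc ⊆ (Set.Icc a b)ᶜ := by
    intro t ht hmem
    exact absurd hmem.2 (not_le.mpr (lt_of_le_of_lt (le_max_left b 1) ht))
  rw [h1]
  exact le_antisymm (le_trans (measure_mono hsub) hcompl.le) zero_le

lemma nu_univ (hD : ∀ X : Ω → ℝ, BddMeas F X → IsDistribution (D X))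
    (R3 : ∀ u : ℝ → ℝ, StrictMono u → Continuous u → ∀ X : Ω → ℝ, BddMeas F X →
      D (fun ω => u (X ω)) = Measure.map u (D X)) :
    D (ind (Set.univ : Set Ω)) (Set.Ioi ((1:ℝ)/2)) = 1 := by
  have hind : ind (Set.univ : Set Ω) = fun _ => (1:ℝ) :=
    funext fun ω => ind_mem (Set.mem_univ ω)
  have hbm : BddMeas F (ind (Set.univ : Set Ω)) := bddMeas_ind MeasurableSet.univ
  haveI hprob : IsProbabilityMeasure (D (ind (Set.univ : Set Ω))) := (hD _ hbm).1
  obtain ⟨_, a, b, hab⟩ := hD _ hbm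
  set cc : ℝ := min a 1 - 1 with hcc
  have hca : cc < a := by
    have : min a 1 ≤ a := min_le_left _ _
    rw [hcc]; linarith
  have hc1 : cc < 1 := by
    have : min a 1 ≤ 1 := min_le_right _ _
    rw [hcc]; linarith
  have hden : (0:ℝ) < 1 - cc := by linarith
  set u : ℝ → ℝ := fun t => 1 + (t - 1) * ((1/2)/(1 - cc)) with hu
  have hslope : (0:ℝ) < (1/2)/(1 - cc) := div_pos one_half_pos hden
  have humono : StrictMono u := by
    intro s t hst
    rw [hu]; dsimp only
    have := mul_lt_mul_of_pos_right (show s - 1 < t - 1 by linarith) hslope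
    linarith
  have hucont : Continuous u :=
    continuous_const.add ((continuous_id.sub continuous_const).mul continuous_const)
  have hcomp : (fun ω => u (ind (Set.univ : Set Ω) ω)) = ind (Set.univ : Set Ω) := by
    funext ω
    rw [hind]
    simp [hu]
  have hmap : D (ind (Set.univ : Set Ω)) = Measure.map u (D (ind (Set.univ : Set Ω))) := by
    conv_lhs => rw [← hcomp]
    exact R3 u humono hucont _ hbm
  have hval : u cc = 1/2 := by
    rw [hu]; dsimp only
    field_simp
    ring
  have h1 : D (ind (Set.univ : Set Ω)) (Set.Ioi ((1:ℝ)/2))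
      = D (ind (Set.univ : Set Ω)) (Set.Ioi cc) := by
    conv_lhs => rw [hmap]
    rw [Measure.map_apply hucont.measurable measurableSet_Ioi, preimage_Ioi humono hval]
  have hsub : Set.Icc a b ⊆ Set.Ioi cc := fun t ht => lt_of_lt_of_le hca ht.1
  rw [h1]
  exact le_antisymm prob_le_one (hab ▸ measure_mono hsub)

lemma nu_tendsto (hD : ∀ X : Ω → ℝ, BddMeas F X → IsDistribution (D X))
    (R2 : ∀ (Xn : ℕ → Ω → ℝ) (X : Ω → ℝ), (∀ n, BddMeas F (Xn n)) → BddMeas F X →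
        (∃ M : ℝ, ∀ n ω, |Xn n ω| ≤ M) →
        (∀ ω, Filter.Tendsto (fun n => Xn n ω) Filter.atTop (nhds (X ω))) →
        WeakConv (fun n => D (Xn n)) (D X))
    (R3 : ∀ u : ℝ → ℝ, StrictMono u → Continuous u → ∀ X : Ω → ℝ, BddMeas F X →
      D (fun ω => u (X ω)) = Measure.map u (D X))
    {A : ℕ → Set Ω} {B : Set Ω} (hAm : ∀ n, MeasurableSet (A n)) (hBm : MeasurableSet B)
    (hptw : ∀ ω, Filter.Tendsto (fun n => ind (A n) ω) Filter.atTop (nhds (ind B ω))) :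
    Filter.Tendsto (fun n => (D (ind (A n)) (Set.Ioi ((1:ℝ)/2))).toReal) Filter.atTop
      (nhds ((D (ind B) (Set.Ioi ((1:ℝ)/2))).toReal)) := by
  have hw : WeakConv (fun n => D (ind (A n))) (D (ind B)) := by
    apply R2 _ _ (fun n => bddMeas_ind (hAm n)) (bddMeas_ind hBm) ⟨1, fun n ω => ?_⟩ hptw
    by_cases h : ω ∈ A n
    · rw [ind_mem h]; norm_num
    · rw [ind_not_mem h]; norm_num
  haveI := (hD _ (bddMeas_ind hBm)).1
  have h1 := conv_at_half (fun n => (hD _ (bddMeas_ind (hAm n))).1)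
    (hD _ (bddMeas_ind hBm)).1 hw (atom_half hD R3 hBm)
  exact (ENNReal.tendsto_toReal (measure_ne_top _ _)).comp h1

end Forward2
section Backward

open Filter Set

variable {Ω : Type*} {F : MeasurableSpace Ω} {D : (Ω → ℝ) → Measure ℝ} {ν : Set Ω → ℝ}

lemma weakconv_of_capacity
    (hD : ∀ X : Ω → ℝ, BddMeas F X → IsDistribution (D X))
    (hcap : IsContinuousCapacity F ν)
    (hsurv : ∀ X : Ω → ℝ, BddMeas F X → ∀ x : ℝ, (D X (Set.Ioi x)).toReal = ν {ω | x < X ω})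
    (Xn : ℕ → Ω → ℝ) (X : Ω → ℝ) (hbn : ∀ n, BddMeas F (Xn n)) (hX : BddMeas F X)
    (hpt : ∀ ω, Filter.Tendsto (fun n => Xn n ω) Filter.atTop (nhds (X ω))) :
    WeakConv (fun n => D (Xn n)) (D X) := by
  classical
  obtain ⟨⟨hν0, hν1, hmono⟩, hcU, hcI⟩ := hcap
  haveI hPX : IsProbabilityMeasure (D X) := (hD X hX).1
  haveI hPn : ∀ n, IsProbabilityMeasure (D (Xn n)) := fun n => (hD _ (hbn n)).1
  set S : ℝ → ℝ := fun x => ν {ω | x < X ω} with hS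
  have hmX : ∀ x : ℝ, MeasurableSet {ω | x < X ω} := fun x => hX.1 measurableSet_Ioi
  have hmXn : ∀ n (x : ℝ), MeasurableSet {ω | x < Xn n ω} :=
    fun n x => (hbn n).1 measurableSet_Ioi
  have hSanti : Antitone S := fun a b hab =>
    hmono _ _ (hmX b) (hmX a) (fun ω h => lt_of_le_of_lt hab h)
  have hb01 : ∀ {A : Set Ω}, MeasurableSet A → 0 ≤ ν A ∧ ν A ≤ 1 := by
    intro A hA
    constructor
    · have := hmono ∅ A MeasurableSet.empty hA (empty_subset A)
      rwa [hν0] at this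
    · have := hmono A univ hA MeasurableSet.univ (subset_univ A)
      rwa [hν1] at this
  -- right continuity of the survival function
  have hrt : ∀ x : ℝ, Tendsto (fun m : ℕ => S (x + 1/(m+1))) atTop (𝓝 (S x)) := by
    intro x
    have hmonoB : Monotone (fun m : ℕ => {ω | x + 1/(m+1 : ℝ) < X ω}) := by
      intro m k hmk ω h
      simp only [mem_setOf_eq] at h ⊢
      have h1 : (1:ℝ)/(k+1) ≤ 1/(m+1) := by
        apply one_div_le_one_div_of_le (by positivity)
        have : (m:ℝ) ≤ k := Nat.cast_le.mpr hmk
        linarith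
      linarith
    have htend := hcU _ (fun m => hmX _) hmonoB
    have hU : (⋃ m : ℕ, {ω | x + 1/(m+1:ℝ) < X ω}) = {ω | x < X ω} := by
      ext ω
      simp only [mem_iUnion, mem_setOf_eq]
      constructor
      · rintro ⟨m, hm⟩
        have : (0:ℝ) < 1/(m+1) := by positivity
        linarith
      · intro h
        obtain ⟨m, hm⟩ := exists_nat_one_div_lt (sub_pos.mpr h)
        exact ⟨m, by linarith⟩
    rw [hU] at htend
    exact htend
  -- left limit equals measure of the closed upper set
  have hlt : ∀ x : ℝ, Tendsto (fun m : ℕ => S (x - 1/(m+1))) atTop (𝓝 (ν {ω | x ≤ X ω})) := by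
    intro x
    have hanti : Antitone (fun m : ℕ => {ω | x - 1/(m+1 : ℝ) < X ω}) := by
      intro m k hmk ω h
      simp only [mem_setOf_eq] at h ⊢
      have h1 : (1:ℝ)/(k+1) ≤ 1/(m+1) := by
        apply one_div_le_one_div_of_le (by positivity)
        have : (m:ℝ) ≤ k := Nat.cast_le.mpr hmk
        linarith
      linarith
    have htend := hcI _ (fun m => hmX _) hanti
    have hI : (⋂ m : ℕ, {ω | x - 1/(m+1:ℝ) < X ω}) = {ω | x ≤ X ω} := by
      ext ω
      simp only [mem_iInter, mem_setOf_eq]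
      constructor
      · intro h
        by_contra hc
        push_neg at hc
        obtain ⟨m, hm⟩ := exists_nat_one_div_lt (sub_pos.mpr hc)
        exact absurd (h m) (by linarith)
      · intro h m
        have : (0:ℝ) < 1/(m+1) := by positivity
        linarith
    rw [hI] at htend
    exact htend
  -- limsup bound
  have hlimsup : ∀ x : ℝ, limsup (fun n => ν {ω | x < Xn n ω}) atTop ≤ ν {ω | x ≤ X ω} := by
    intro x
    set C : ℕ → Set Ω := fun k => ⋃ j, {ω | x < Xn (k + j) ω} with hC
    have hCm : ∀ k, MeasurableSet (C k) := fun k => MeasurableSet.iUnion fun j => hmXn _ _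
    have hCanti : Antitone C := by
      intro k k' hkk' ω hω
      simp only [hC, mem_iUnion, mem_setOf_eq] at hω ⊢
      obtain ⟨j, hj⟩ := hω
      exact ⟨(k' - k) + j, by rwa [show k + ((k' - k) + j) = k' + j by omega]⟩
    have hCtend := hcI C hCm hCanti
    have hCsub : (⋂ k, C k) ⊆ {ω | x ≤ X ω} := by
      intro ω hω
      simp only [mem_iInter, hC, mem_iUnion, mem_setOf_eq] at hω
      simp only [mem_setOf_eq]
      by_contra hc
      push_neg at hc
      have hev : ∀ᶠ n in atTop, Xn n ω < x := (hpt ω).eventually_lt_const hc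
      obtain ⟨K, hK⟩ := eventually_atTop.mp hev
      obtain ⟨j, hj⟩ := hω K
      exact absurd hj (not_lt.mpr (le_of_lt (hK _ (Nat.le_add_right K j))))
    have hle : ∀ k, limsup (fun n => ν {ω | x < Xn n ω}) atTop ≤ ν (C k) := by
      intro k
      apply limsup_le_of_le (isCoboundedUnder_le_of_eventually_le atTop
        (Eventually.of_forall fun n => (hb01 (hmXn n x)).1))
      filter_upwards [eventually_ge_atTop k] with n hn
      refine hmono _ _ (hmXn n x) (hCm k) ?_
      intro ω hω
      simp only [hC, mem_iUnion, mem_setOf_eq]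
      exact ⟨n - k, by rwa [show k + (n - k) = n by omega]⟩
    have hfin : limsup (fun n => ν {ω | x < Xn n ω}) atTop ≤ ν (⋂ k, C k) :=
      ge_of_tendsto hCtend (Eventually.of_forall hle)
    have hle2 : MeasurableSet {ω | x ≤ X ω} := hX.1 measurableSet_Ici
    exact hfin.trans (hmono _ _ (MeasurableSet.iInter hCm) hle2 hCsub)
  -- liminf bound
  have hliminf : ∀ x y : ℝ, y < x →
      S x ≤ liminf (fun n => ν {ω | y < Xn n ω}) atTop := by
    intro x y hyx
    set Dk : ℕ → Set Ω := fun k => ⋂ j, {ω | y < Xn (k + j) ω} with hDkdef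
    have hDm : ∀ k, MeasurableSet (Dk k) := fun k => MeasurableSet.iInter fun j => hmXn _ _
    have hDmono : Monotone Dk := by
      intro k k' hkk' ω hω
      simp only [hDkdef, mem_iInter, mem_setOf_eq] at hω ⊢
      intro j
      have := hω ((k' - k) + j)
      rwa [show k + ((k' - k) + j) = k' + j by omega] at this
    have hDtend := hcU Dk hDm hDmono
    have hsub : {ω | x < X ω} ⊆ ⋃ k, Dk k := by
      intro ω hω
      simp only [mem_setOf_eq] at hω
      have hev : ∀ᶠ n in atTop, y < Xn n ω := (hpt ω).eventually_const_lt (lt_trans hyx hω)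
      obtain ⟨K, hK⟩ := eventually_atTop.mp hev
      refine mem_iUnion.mpr ⟨K, ?_⟩
      simp only [hDkdef, mem_iInter, mem_setOf_eq]
      intro j
      exact hK _ (Nat.le_add_right K j)
    have h1 : S x ≤ ν (⋃ k, Dk k) := hmono _ _ (hmX x) (MeasurableSet.iUnion hDm) hsub
    have h2 : ν (⋃ k, Dk k) ≤ liminf (fun n => ν {ω | y < Xn n ω}) atTop := by
      apply le_of_tendsto hDtend
      apply Eventually.of_forall
      intro k
      apply le_liminf_of_le (isCoboundedUnder_ge_of_eventually_le atTop
        (Eventually.of_forall fun n => (hb01 (hmXn n y)).2))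
      filter_upwards [eventually_ge_atTop k] with n hn
      refine hmono _ _ (hDm k) (hmXn n y) ?_
      intro ω hω
      simp only [hDkdef, mem_iInter, mem_setOf_eq] at hω
      have := hω (n - k)
      rwa [show k + (n - k) = n by omega] at this
    exact h1.trans h2
  -- convergence at continuity points
  have hconv : ∀ x : ℝ, ContinuousAt S x →
      Tendsto (fun n => ν {ω | x < Xn n ω}) atTop (𝓝 (S x)) := by
    intro x hx
    have hbdda : IsBoundedUnder (· ≤ ·) atTop (fun n => ν {ω | x < Xn n ω}) :=
      isBoundedUnder_of ⟨1, fun n => (hb01 (hmXn n x)).2⟩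
    have hbddb : IsBoundedUnder (· ≥ ·) atTop (fun n => ν {ω | x < Xn n ω}) :=
      isBoundedUnder_of ⟨0, fun n => (hb01 (hmXn n x)).1⟩
    have heq1 : ν {ω | x ≤ X ω} = S x := by
      have h2 : Tendsto (fun m : ℕ => S (x - 1/(m+1))) atTop (𝓝 (S x)) := by
        have harg : Tendsto (fun m : ℕ => x - 1/(m+1:ℝ)) atTop (𝓝 x) := by
          have h0 := (tendsto_const_nhds :
            Tendsto (fun _ : ℕ => x) atTop (𝓝 x)).sub
            tendsto_one_div_add_atTop_nhds_zero_nat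
          simpa using h0
        exact (hx.tendsto).comp harg
      exact tendsto_nhds_unique (hlt x) h2
    have hup : limsup (fun n => ν {ω | x < Xn n ω}) atTop ≤ S x := heq1 ▸ hlimsup x
    have hlo : S x ≤ liminf (fun n => ν {ω | x < Xn n ω}) atTop := by
      apply le_of_tendsto (hrt x)
      apply Eventually.of_forall
      intro m
      apply hliminf (x + 1/(m+1)) x
      have : (0:ℝ) < 1/(m+1) := by positivity
      linarith
    exact tendsto_of_le_liminf_of_limsup_le hlo hup hbdda hbddb
  -- convergence on Ioc with continuity endpoints
  have hIoc : ∀ a b : ℝ, ContinuousAt S a → ContinuousAt S b →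
      Tendsto (fun n => (D (Xn n) (Ioc a b)).toReal) atTop
        (𝓝 ((D X (Ioc a b)).toReal)) := by
    intro a b ha hb
    rcases le_or_gt a b with hab | hab
    · have key : ∀ n, (D (Xn n) (Ioc a b)).toReal
          = ν {ω | a < Xn n ω} - ν {ω | b < Xn n ω} := by
        intro n
        rw [toReal_Ioc hab, hsurv _ (hbn n), hsurv _ (hbn n)]
      have keyX : (D X (Ioc a b)).toReal = S a - S b := by
        rw [toReal_Ioc hab, hsurv X hX, hsurv X hX]
      rw [keyX]
      exact Tendsto.congr (fun n => (key n).symm) ((hconv a ha).sub (hconv b hb))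
    · rw [Set.Ioc_eq_empty (not_lt.mpr hab.le)]
      simp only [measure_empty, ENNReal.toReal_zero]
      exact tendsto_const_nhds
  -- convergence on finite unions of Ioc with continuity endpoints
  have hfin : ∀ (N : ℕ) (a b : ℕ → ℝ), (∀ k, ContinuousAt S (a k)) →
      (∀ k, ContinuousAt S (b k)) →
      Tendsto (fun n => (D (Xn n) (⋃ k ∈ Finset.range N, Ioc (a k) (b k))).toReal) atTop
        (𝓝 ((D X (⋃ k ∈ Finset.range N, Ioc (a k) (b k))).toReal)) := by
    intro N
    induction N with
    | zero =>
      intro a b _ _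
      simp only [Finset.range_zero, Finset.notMem_empty, iUnion_of_empty, iUnion_empty,
        measure_empty, ENNReal.toReal_zero]
      exact tendsto_const_nhds
    | succ N ih =>
      intro a b ha hb
      have hseteq : (⋃ k ∈ Finset.range (N+1), Ioc (a k) (b k))
          = (⋃ k ∈ Finset.range N, Ioc (a k) (b k)) ∪ Ioc (a N) (b N) := by
        rw [Finset.range_add_one, Finset.set_biUnion_insert]
        exact union_comm _ _
      have hinter : (⋃ k ∈ Finset.range N, Ioc (a k) (b k)) ∩ Ioc (a N) (b N)
          = ⋃ k ∈ Finset.range N, Ioc ((a k) ⊔ (a N)) ((b k) ⊓ (b N)) := by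
        rw [Set.iUnion₂_inter]
        refine Set.iUnion₂_congr fun k _ => ?_
        exact Set.Ioc_inter_Ioc
      have h1 := ih a b ha hb
      have h2 := hIoc (a N) (b N) (ha N) (hb N)
      have h3 := ih (fun k => (a k) ⊔ (a N)) (fun k => (b k) ⊓ (b N))
        (fun k => by
          rcases le_total (a N) (a k) with h | h
          · rw [sup_eq_left.mpr h]; exact ha k
          · rw [sup_eq_right.mpr h]; exact ha N)
        (fun k => by
          rcases le_total (b k) (b N) with h | h
          · rw [inf_eq_left.mpr h]; exact hb k
          · rw [inf_eq_right.mpr h]; exact hb N)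
      rw [← hinter] at h3
      have hform : ∀ (μ : Measure ℝ) (_ : IsProbabilityMeasure μ),
          (μ (⋃ k ∈ Finset.range (N+1), Ioc (a k) (b k))).toReal
          = (μ (⋃ k ∈ Finset.range N, Ioc (a k) (b k))).toReal
            + (μ (Ioc (a N) (b N))).toReal
            - (μ ((⋃ k ∈ Finset.range N, Ioc (a k) (b k)) ∩ Ioc (a N) (b N))).toReal := by
        intro μ hμ
        rw [hseteq]
        exact toReal_union measurableSet_Ioc
      have hgoal := (h1.add h2).sub h3
      rw [← hform (D X) hPX] at hgoal
      exact Tendsto.congr (fun n => (hform (D (Xn n)) (hPn n)).symm) hgoal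
  -- open set liminf bound
  have hopen : ∀ G : Set ℝ, IsOpen G →
      D X G ≤ atTop.liminf (fun n => D (Xn n) G) := by
    intro G hG
    have hCcnt : Set.Countable {x | ¬ContinuousAt S x} := hSanti.countable_not_continuousAt
    have hdense : Dense {x | ¬ContinuousAt S x}ᶜ := hCcnt.dense_compl ℝ
    have hex : ∀ p q : ℚ, (p:ℝ) < q → ∃ c : ℝ, ContinuousAt S c ∧ (p:ℝ) < c ∧ c < (q:ℝ) := by
      intro p q hpq
      obtain ⟨c, hc1, hc2⟩ := hdense.exists_between hpq
      exact ⟨c, by simpa using hc1, hc2.1, hc2.2⟩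
    set g : ℚ × ℚ → ℝ := fun pq =>
      if h : (pq.1:ℝ) < pq.2 then (hex pq.1 pq.2 h).choose else 0 with hg
    have hgspec : ∀ p q : ℚ, (h : (p:ℝ) < q) →
        ContinuousAt S (g (p, q)) ∧ (p:ℝ) < g (p, q) ∧ g (p, q) < (q:ℝ) := by
      intro p q h
      rw [hg]
      dsimp only
      rw [dif_pos h]
      exact (hex p q h).choose_spec
    set ι := {r : (ℚ × ℚ) × ℚ × ℚ // Ioc (g r.1) (g r.2) ⊆ G ∧
      ContinuousAt S (g r.1) ∧ ContinuousAt S (g r.2)} with hι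
    have hcover : G = ⋃ i : ι, Ioc (g i.1.1) (g i.1.2) := by
      apply Subset.antisymm
      · intro x hx
        obtain ⟨ε, hε, hball⟩ := Metric.isOpen_iff.mp hG x hx
        rw [Real.ball_eq_Ioo] at hball
        obtain ⟨p1, hp1⟩ := exists_rat_btwn (show x - ε < x by linarith)
        obtain ⟨p2, hp2⟩ := exists_rat_btwn hp1.2
        obtain ⟨q1, hq1⟩ := exists_rat_btwn (show x < x + ε by linarith)
        obtain ⟨q2, hq2⟩ := exists_rat_btwn hq1.2
        have h12 : (p1:ℝ) < p2 := hp2.1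
        have h34 : (q1:ℝ) < q2 := hq2.1
        obtain ⟨hc1, hgt1, hlt1⟩ := hgspec p1 p2 h12
        obtain ⟨hc2, hgt2, hlt2⟩ := hgspec q1 q2 h34
        have hsubG : Ioc (g (p1, p2)) (g (q1, q2)) ⊆ G := by
          intro t ht
          apply hball
          constructor
          · have : x - ε < (p1:ℝ) := hp1.1
            have h' : (p1:ℝ) < g (p1, p2) := hgt1
            have := ht.1
            linarith
          · have : (q2:ℝ) < x + ε := hq2.2
            have h' : g (q1, q2) < (q2:ℝ) := hlt2
            have := ht.2
            linarith
        refine mem_iUnion.mpr ⟨⟨((p1, p2), (q1, q2)), hsubG, hc1, hc2⟩, ?_⟩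
        constructor
        · have : g (p1, p2) < (p2:ℝ) := hlt1
          have : (p2:ℝ) < x := hp2.2
          calc g (p1, p2) < (p2:ℝ) := hlt1
            _ < x := hp2.2
        · have : x < (q1:ℝ) := hq1.1
          calc x ≤ (q1:ℝ) := le_of_lt hq1.1
            _ ≤ g (q1, q2) := le_of_lt hgt2
      · refine iUnion_subset fun i => i.2.1
    by_cases hne : Nonempty ι
    · haveI := hne
      obtain ⟨e, he⟩ := exists_surjective_nat ι
      set A : ℕ → ℝ := fun k => g (e k).1.1 with hAdef
      set B : ℕ → ℝ := fun k => g (e k).1.2 with hBdef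
      have hA : ∀ k, ContinuousAt S (A k) := fun k => (e k).2.2.1
      have hB : ∀ k, ContinuousAt S (B k) := fun k => (e k).2.2.2
      set V : ℕ → Set ℝ := fun N => ⋃ k ∈ Finset.range N, Ioc (A k) (B k) with hVdef
      have hVmono : Monotone V := by
        intro N M hNM
        exact Set.biUnion_subset_biUnion_left (Finset.range_subset_range.mpr hNM)
      have hVsubG : ∀ N, V N ⊆ G := by
        intro N
        refine Set.iUnion₂_subset fun k _ => ?_
        exact (e k).2.1
      have hVunion : (⋃ N, V N) = G := by
        apply Subset.antisymm
        · exact iUnion_subset hVsubG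
        · intro x hx
          rw [hcover] at hx
          obtain ⟨i, hi⟩ := mem_iUnion.mp hx
          obtain ⟨k, hk⟩ := he i
          refine mem_iUnion.mpr ⟨k+1, ?_⟩
          refine Set.mem_biUnion (Finset.self_mem_range_succ k) ?_
          rw [hAdef, hBdef]
          dsimp only
          rw [hk]
          exact hi
      have hVlim : Tendsto (fun N => D X (V N)) atTop (𝓝 (D X G)) := by
        have := tendsto_measure_iUnion_atTop (μ := D X) hVmono
        rw [hVunion] at this
        exact this
      refine le_of_tendsto hVlim (Eventually.of_forall fun N => ?_)
      have htr := hfin N A B hA hB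
      have hENN : Tendsto (fun n => D (Xn n) (V N)) atTop (𝓝 (D X (V N))) := by
        rw [← ENNReal.tendsto_toReal_iff (fun n => measure_ne_top _ _) (measure_ne_top _ _)]
        exact htr
      calc D X (V N) = liminf (fun n => D (Xn n) (V N)) atTop := hENN.liminf_eq.symm
        _ ≤ liminf (fun n => D (Xn n) G) atTop :=
          liminf_le_liminf (Eventually.of_forall fun n => measure_mono (hVsubG N))
    · have hGempty : G = ∅ := by
        rw [hcover]
        haveI : IsEmpty ι := not_nonempty_iff.mp hne
        exact iUnion_of_empty _
      rw [hGempty]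
      simp
  -- portmanteau
  let P : MeasureTheory.ProbabilityMeasure ℝ := ⟨D X, hPX⟩
  let Pn : ℕ → MeasureTheory.ProbabilityMeasure ℝ := fun n => ⟨D (Xn n), hPn n⟩
  have key : Tendsto Pn atTop (𝓝 P) := by
    apply MeasureTheory.tendsto_of_forall_isOpen_le_liminf
    intro G hG
    have aux : (ENNReal.ofNNReal (liminf (fun i => Pn i G) atTop))
        = liminf (fun i => ENNReal.ofNNReal (Pn i G)) atTop := by
      refine Monotone.map_liminf_of_continuousAt (F := atTop) ENNReal.coe_mono
        (fun i => Pn i G) ENNReal.continuous_coe.continuousAt ?_ ?_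
      · exact Filter.IsBoundedUnder.isCoboundedUnder_ge ⟨1, by simp⟩
      · exact ⟨0, by simp⟩
    rw [← ENNReal.coe_le_coe, aux]
    simp only [MeasureTheory.ProbabilityMeasure.ennreal_coeFn_eq_coeFn_toMeasure]
    exact hopen G hG
  exact fun f => MeasureTheory.ProbabilityMeasure.tendsto_iff_forall_integral_tendsto.mp key f

end Backward

end Stmt0Aux


/-- characterization of Choquet act-to-distribution mappings
(Theorem `theo:riskEq`): `D` satisfies (R1)-(R3) iff `D` is given by a
continuous capacity via survival functions. -/
theorem stmt0 {Ω : Type*} [F : MeasurableSpace Ω] (D : (Ω → ℝ) → Measure ℝ)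
    (hD : ∀ X : Ω → ℝ, BddMeas F X → IsDistribution (D X)) :
    ((∀ X Y : Ω → ℝ, BddMeas F X → BddMeas F Y → (∀ ω, Y ω ≤ X ω) → FSDle (D Y) (D X)) ∧
     (∀ (Xn : ℕ → Ω → ℝ) (X : Ω → ℝ), (∀ n, BddMeas F (Xn n)) → BddMeas F X →
        (∃ M : ℝ, ∀ n ω, |Xn n ω| ≤ M) →
        (∀ ω, Filter.Tendsto (fun n => Xn n ω) Filter.atTop (nhds (X ω))) →
        WeakConv (fun n => D (Xn n)) (D X)) ∧
     (∀ u : ℝ → ℝ, StrictMono u → Continuous u → ∀ X : Ω → ℝ, BddMeas F X →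
        D (fun ω => u (X ω)) = Measure.map u (D X))) ↔
    (∃ ν : Set Ω → ℝ, IsContinuousCapacity F ν ∧
       ∀ X : Ω → ℝ, BddMeas F X → ∀ x : ℝ, (D X (Set.Ioi x)).toReal = ν {ω | x < X ω}) := by
  constructor
  · rintro ⟨R1, R2, R3⟩
    refine ⟨fun A => (D (ind A) (Set.Ioi ((1:ℝ)/2))).toReal, ⟨⟨?_, ?_, ?_⟩, ?_, ?_⟩, ?_⟩
    · simp only [Stmt0Aux.nu_empty hD R3, ENNReal.toReal_zero]
    · simp only [Stmt0Aux.nu_univ hD R3, ENNReal.toReal_one]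
    · intro A B hA hB hAB
      haveI := (hD _ (Stmt0Aux.bddMeas_ind hB)).1
      have hle : ∀ ω, ind A ω ≤ ind B ω := by
        intro ω
        by_cases h : ω ∈ A
        · rw [Stmt0Aux.ind_mem h, Stmt0Aux.ind_mem (hAB h)]
        · rw [Stmt0Aux.ind_not_mem h]
          by_cases h' : ω ∈ B
          · rw [Stmt0Aux.ind_mem h']; norm_num
          · rw [Stmt0Aux.ind_not_mem h']
      have h := R1 (ind B) (ind A) (Stmt0Aux.bddMeas_ind hB) (Stmt0Aux.bddMeas_ind hA)
        hle ((1:ℝ)/2)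
      exact ENNReal.toReal_mono (measure_ne_top _ _) h
    · intro A hAm hAmono
      refine Stmt0Aux.nu_tendsto hD R2 R3 hAm (MeasurableSet.iUnion hAm) ?_
      intro ω
      by_cases h : ω ∈ ⋃ n, A n
      · rw [Stmt0Aux.ind_mem h]
        obtain ⟨m, hm⟩ := Set.mem_iUnion.mp h
        refine Filter.Tendsto.congr' ?_ tendsto_const_nhds
        filter_upwards [Filter.eventually_ge_atTop m] with n hn
        exact (Stmt0Aux.ind_mem (hAmono hn hm)).symm
      · rw [Stmt0Aux.ind_not_mem h]
        refine Filter.Tendsto.congr (fun n => ?_) tendsto_const_nhds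
        exact (Stmt0Aux.ind_not_mem fun hc => h (Set.mem_iUnion.mpr ⟨n, hc⟩)).symm
    · intro A hAm hAanti
      refine Stmt0Aux.nu_tendsto hD R2 R3 hAm (MeasurableSet.iInter hAm) ?_
      intro ω
      by_cases h : ω ∈ ⋂ n, A n
      · rw [Stmt0Aux.ind_mem h]
        refine Filter.Tendsto.congr (fun n => ?_) tendsto_const_nhds
        exact (Stmt0Aux.ind_mem (Set.mem_iInter.mp h n)).symm
      · rw [Stmt0Aux.ind_not_mem h]
        obtain ⟨m, hm⟩ : ∃ m, ω ∉ A m := by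
          by_contra hc
          push_neg at hc
          exact h (Set.mem_iInter.mpr hc)
        refine Filter.Tendsto.congr' ?_ tendsto_const_nhds
        filter_upwards [Filter.eventually_ge_atTop m] with n hn
        exact (Stmt0Aux.ind_not_mem fun hc => hm (hAanti hn hc)).symm
    · intro X hX x
      exact congrArg ENNReal.toReal (Stmt0Aux.keyId hD R2 R3 hX x)
  · rintro ⟨ν, hcap, hsurv⟩
    obtain ⟨⟨hν0, hν1, hmono⟩, hcU, hcI⟩ := hcap
    refine ⟨?_, ?_, ?_⟩
    · intro X Y hX hY hle x
      haveI := (hD X hX).1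
      haveI := (hD Y hY).1
      rw [← ENNReal.toReal_le_toReal (measure_ne_top _ _) (measure_ne_top _ _),
        hsurv Y hY x, hsurv X hX x]
      exact hmono _ _ (hY.1 measurableSet_Ioi) (hX.1 measurableSet_Ioi)
        (fun ω h => lt_of_lt_of_le h (hle ω))
    · intro Xn X hbn hX hub hpt
      exact Stmt0Aux.weakconv_of_capacity hD ⟨⟨hν0, hν1, hmono⟩, hcU, hcI⟩ hsurv
        Xn X hbn hX hpt
    · intro u humono hucont X hX
      haveI := (hD X hX).1
      have hbu : BddMeas F (fun ω => u (X ω)) := Stmt0Aux.bddMeas_comp hX hucont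
      haveI := (hD _ hbu).1
      haveI : IsProbabilityMeasure (Measure.map u (D X)) :=
        MeasureTheory.Measure.isProbabilityMeasure_map hucont.measurable.aemeasurable
      apply Stmt0Aux.ext_survival
      intro y
      rw [Measure.map_apply hucont.measurable measurableSet_Ioi]
      by_cases hex : ∃ c, u c = y
      · obtain ⟨c, hc⟩ := hex
        rw [Stmt0Aux.preimage_Ioi humono hc]
        apply (ENNReal.toReal_eq_toReal_iff' (measure_ne_top _ _) (measure_ne_top _ _)).mp
        rw [hsurv _ hbu y, hsurv X hX c]
        congr 1
        ext ω
        simp only [Set.mem_setOf_eq, ← hc, humono.lt_iff_lt]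
      · by_cases hlt : ∃ t, y < u t
        · have hall : ∀ s, y < u s := by
            intro s
            rcases lt_trichotomy (u s) y with h | h | h
            · obtain ⟨t, ht⟩ := hlt
              have hst : s ≤ t := by
                by_contra hcon
                push_neg at hcon
                have := humono hcon
                linarith
              have hsub : Set.Icc (u s) (u t) ⊆ Set.range u :=
                (intermediate_value_Icc hst hucont.continuousOn).trans
                  (Set.image_subset_range _ _)
              obtain ⟨c, hc⟩ := hsub ⟨le_of_lt h, le_of_lt ht⟩
              exact absurd ⟨c, hc⟩ hex
            · exact absurd ⟨s, h⟩ hex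
            · exact h
          have h1 : u ⁻¹' Set.Ioi y = Set.univ := by
            ext t; simpa using hall t
          have h2 : {ω | y < u (X ω)} = Set.univ := by
            ext ω; simpa using hall (X ω)
          apply (ENNReal.toReal_eq_toReal_iff' (measure_ne_top _ _) (measure_ne_top _ _)).mp
          rw [hsurv _ hbu y, h2, hν1, h1]
          simp
        · push_neg at hlt
          have h1 : u ⁻¹' Set.Ioi y = ∅ := by
            ext t
            simpa using hlt t
          have h2 : {ω | y < u (X ω)} = ∅ := by
            ext ω
            simpa using hlt (X ω)
          apply (ENNReal.toReal_eq_toReal_iff' (measure_ne_top _ _) (measure_ne_top _ _)).mp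
          rw [hsurv _ hbu y, h2, hν0, h1]
          simp

end
end

section
/- Let ν be a continuous capacity on a measurable space (Ω, F). Then ν is supermodular if and only if for all bounded measurable X, Y : Ω → ℝ, all λ ∈ [0,1], and all α ∈ (0,1]: ∫₀^α q_ν(λX + (1−λ)Y, β) dβ ≥ λ ∫₀^α q_ν(X, β) dβ + (1−λ) ∫₀^α q_ν(Y, β) dβ. (For compactly supported distributions this integrated-quantile condition is equivalent to the paper's concavity of the Choquet act-to-distribution mapping 𝔇_ν with respect to second-order stochastic dominance.) -/
open MeasureTheory Filter Topology

noncomputable section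

namespace Stmt3Aux

set_option linter.unusedSectionVars false

variable {Ω : Type*} [F : MeasurableSpace Ω]

/-- number of sets in `L` containing `ω` -/
def cnt (L : List (Set Ω)) (ω : Ω) : ℕ :=
  (L.map (fun A => A.indicator (fun _ => (1:ℕ)) ω)).sum

lemma cnt_cons (A : Set Ω) (L : List (Set Ω)) (ω : Ω) :
    cnt (A :: L) ω = A.indicator (fun _ => 1) ω + cnt L ω := by simp [cnt]

lemma cnt_append (L₁ L₂ : List (Set Ω)) (ω : Ω) :
    cnt (L₁ ++ L₂) ω = cnt L₁ ω + cnt L₂ ω := by simp [cnt]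

lemma cnt_le_length (L : List (Set Ω)) (ω : Ω) : cnt L ω ≤ L.length := by
  induction L with
  | nil => simp [cnt]
  | cons A T ih =>
      rw [cnt_cons]
      have h1 : A.indicator (fun _ => (1:ℕ)) ω ≤ 1 := by
        by_cases h : ω ∈ A <;> simp [h]
      simp only [List.length_cons]
      omega

lemma cnt_measurable (L : List (Set Ω)) (hL : ∀ A ∈ L, MeasurableSet A) :
    Measurable (cnt L) := by
  induction L with
  | nil =>
      have : cnt ([] : List (Set Ω)) = fun _ => 0 := rfl
      rw [this]; exact measurable_const
  | cons A T ih =>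
      have hA : Measurable (fun ω => A.indicator (fun _ => (1:ℕ)) ω) :=
        measurable_const.indicator (hL A (by simp))
      have hT := ih (fun B hB => hL B (by simp [hB]))
      have heq : cnt (A :: T) = (fun ω => A.indicator (fun _ => (1:ℕ)) ω) + cnt T :=
        funext fun ω => cnt_cons A T ω
      rw [heq]; exact hA.add hT

lemma measurableSet_cnt_ge (L : List (Set Ω)) (hL : ∀ A ∈ L, MeasurableSet A) (j : ℕ) :
    MeasurableSet {ω | j ≤ cnt L ω} := by
  have : {ω | j ≤ cnt L ω} = cnt L ⁻¹' (Set.Ici j) := rfl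
  rw [this]
  exact (cnt_measurable L hL) measurableSet_Ici


lemma chain_ineq (m : Set Ω → ℝ) (h0 : m ∅ = 0)
    (hsup : ∀ A B : Set Ω, MeasurableSet A → MeasurableSet B →
      m A + m B ≤ m (A ∪ B) + m (A ∩ B)) :
    ∀ (L : List (Set Ω)), (∀ A ∈ L, MeasurableSet A) →
      (L.map m).sum ≤ ∑ j ∈ Finset.range L.length, m {ω | j + 1 ≤ cnt L ω} := by
  intro L
  induction L with
  | nil => simp
  | cons A T ih =>
      intro hL
      have hA : MeasurableSet A := hL A (by simp)
      have hT : ∀ B ∈ T, MeasurableSet B := fun B hB => hL B (by simp [hB])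
      set K : ℕ → Set Ω := fun j => {ω | j ≤ cnt T ω} with hK
      have hKmeas : ∀ j, MeasurableSet (K j) := fun j => measurableSet_cnt_ge T hT j
      have hKsub : ∀ j, K (j+1) ⊆ K j := by
        intro j ω hω; exact le_trans (Nat.le_succ j) hω
      have hKtop : K 0 = Set.univ := by
        ext ω; simp [hK]
      have hKbot : K (T.length + 1) = ∅ := by
        ext ω
        simp only [hK, Set.mem_setOf_eq, Set.mem_empty_iff_false, iff_false, not_le]
        exact Nat.lt_succ_of_le (cnt_le_length T ω)
      have hN : ∀ j, {ω | j + 1 ≤ cnt (A :: T) ω} = K (j+1) ∪ (K j ∩ A) := by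
        intro j
        ext ω
        rw [Set.mem_union, Set.mem_inter_iff]
        simp only [hK, Set.mem_setOf_eq, cnt_cons]
        by_cases h : ω ∈ A <;> simp [h] <;> omega
      have key : ∀ j, m (K (j+1)) + (m (K j ∩ A) - m (K (j+1) ∩ A))
          ≤ m {ω | j + 1 ≤ cnt (A :: T) ω} := by
        intro j
        have h1 := hsup (K (j+1)) (K j ∩ A) (hKmeas _) ((hKmeas _).inter hA)
        have h3 : K (j+1) ∩ (K j ∩ A) = K (j+1) ∩ A := by
          rw [← Set.inter_assoc, Set.inter_eq_left.mpr (hKsub j)]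
        rw [h3, ← hN j] at h1
        linarith
      have hsum : ∑ j ∈ Finset.range (T.length + 1),
            (m (K (j+1)) + (m (K j ∩ A) - m (K (j+1) ∩ A)))
          ≤ ∑ j ∈ Finset.range (T.length + 1), m {ω | j + 1 ≤ cnt (A :: T) ω} :=
        Finset.sum_le_sum (fun j _ => key j)
      have htel : ∑ j ∈ Finset.range (T.length + 1),
            (m (K j ∩ A) - m (K (j+1) ∩ A)) = m A := by
        rw [Finset.sum_range_sub' (fun j => m (K j ∩ A))]
        rw [hKtop, hKbot]
        simp [h0]
      calc ((A :: T).map m).sum = m A + (T.map m).sum := by simp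
        _ ≤ m A + ∑ j ∈ Finset.range T.length, m (K (j+1)) := by
            have := ih hT; exact add_le_add le_rfl this
        _ ≤ m A + ∑ j ∈ Finset.range (T.length + 1), m (K (j+1)) := by
            rw [Finset.sum_range_succ]
            have : m (K (T.length + 1)) = 0 := by rw [hKbot, h0]
            linarith
        _ = ∑ j ∈ Finset.range (T.length + 1),
              (m (K (j+1)) + (m (K j ∩ A) - m (K (j+1) ∩ A))) := by
            rw [Finset.sum_add_distrib, htel]; ring
        _ ≤ ∑ j ∈ Finset.range (T.length + 1), m {ω | j + 1 ≤ cnt (A :: T) ω} := hsum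
        _ = ∑ j ∈ Finset.range ((A :: T).length), m {ω | j + 1 ≤ cnt (A :: T) ω} := by
            simp


/-! ### distorted capacity and layer functional -/

def dcap (ν : Set Ω → ℝ) (α : ℝ) (A : Set Ω) : ℝ := max (ν A - (1 - α)) 0

section Dcap

variable {ν : Set Ω → ℝ} {α : ℝ}

lemma dcap_nonneg (A : Set Ω) : 0 ≤ dcap ν α A := le_max_right _ _

lemma dcap_empty (hcap : IsCapacity F ν) (hα1 : α ≤ 1) : dcap ν α (∅ : Set Ω) = 0 := by
  simp [dcap, hcap.1]; linarith

lemma nu_le_one (hcap : IsCapacity F ν) {A : Set Ω} (hA : MeasurableSet A) : ν A ≤ 1 := by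
  have := hcap.2.2 A Set.univ hA MeasurableSet.univ (Set.subset_univ A)
  rw [hcap.2.1] at this; exact this

lemma nu_nonneg (hcap : IsCapacity F ν) {A : Set Ω} (hA : MeasurableSet A) : 0 ≤ ν A := by
  have := hcap.2.2 ∅ A MeasurableSet.empty hA (Set.empty_subset A)
  rw [hcap.1] at this; exact this

lemma dcap_le (hcap : IsCapacity F ν) (hα0 : 0 ≤ α) {A : Set Ω} (hA : MeasurableSet A) :
    dcap ν α A ≤ α := by
  have h1 := nu_le_one hcap hA
  apply max_le _ hα0; linarith

lemma dcap_mono (hcap : IsCapacity F ν) {A B : Set Ω} (hA : MeasurableSet A)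
    (hB : MeasurableSet B) (hAB : A ⊆ B) : dcap ν α A ≤ dcap ν α B := by
  have := hcap.2.2 A B hA hB hAB
  exact max_le_max (by linarith) le_rfl

lemma dcap_supermodular (hcap : IsCapacity F ν) (hsm : Supermodular F ν)
    {A B : Set Ω} (hA : MeasurableSet A) (hB : MeasurableSet B) :
    dcap ν α A + dcap ν α B ≤ dcap ν α (A ∪ B) + dcap ν α (A ∩ B) := by
  have hU : MeasurableSet (A ∪ B) := hA.union hB
  have hI : MeasurableSet (A ∩ B) := hA.inter hB
  have hsum := hsm A B hA hB
  have hca : ν A ≤ ν (A ∪ B) := hcap.2.2 A _ hA hU Set.subset_union_left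
  have hcb : ν B ≤ ν (A ∪ B) := hcap.2.2 B _ hB hU Set.subset_union_right
  simp only [dcap]
  rcases le_total (ν A) (1 - α) with h1 | h1 <;> rcases le_total (ν B) (1 - α) with h2 | h2
  · rw [max_eq_right (by linarith : ν A - (1-α) ≤ 0),
      max_eq_right (by linarith : ν B - (1-α) ≤ 0)]
    have := le_max_right (ν (A ∪ B) - (1-α)) (0:ℝ)
    have := le_max_right (ν (A ∩ B) - (1-α)) (0:ℝ)
    linarith
  · rw [max_eq_right (by linarith : ν A - (1-α) ≤ 0),
      max_eq_left (by linarith : (0:ℝ) ≤ ν B - (1-α))]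
    have := le_max_left (ν (A ∪ B) - (1-α)) (0:ℝ)
    have := le_max_right (ν (A ∩ B) - (1-α)) (0:ℝ)
    linarith
  · rw [max_eq_left (by linarith : (0:ℝ) ≤ ν A - (1-α)),
      max_eq_right (by linarith : ν B - (1-α) ≤ 0)]
    have := le_max_left (ν (A ∪ B) - (1-α)) (0:ℝ)
    have := le_max_right (ν (A ∩ B) - (1-α)) (0:ℝ)
    linarith
  · rw [max_eq_left (by linarith : (0:ℝ) ≤ ν A - (1-α)),
      max_eq_left (by linarith : (0:ℝ) ≤ ν B - (1-α)),
      max_eq_left (by linarith : (0:ℝ) ≤ ν (A ∪ B) - (1-α))]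
    have := le_max_left (ν (A ∩ B) - (1-α)) (0:ℝ)
    linarith

end Dcap

/-! ### the layer functional phi -/

def phi (ν : Set Ω → ℝ) (α : ℝ) (X : Ω → ℝ) (M : ℝ) : ℝ :=
  ∫ y in (-M)..M, dcap ν α {ω | y < X ω}

section Phi

variable {ν : Set Ω → ℝ} {α : ℝ}

lemma upSet_measurable {X : Ω → ℝ} (hX : Measurable X) (y : ℝ) :
    MeasurableSet {ω | y < X ω} := measurableSet_lt measurable_const hX

lemma dcap_layer_antitone (hcap : IsCapacity F ν) {X : Ω → ℝ} (hX : Measurable X) :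
    Antitone (fun y => dcap ν α {ω | y < X ω}) := by
  intro y z hyz
  exact dcap_mono hcap (upSet_measurable hX z) (upSet_measurable hX y)
    (fun ω h => lt_of_le_of_lt hyz h)

lemma layer_intervalIntegrable (hcap : IsCapacity F ν) {X : Ω → ℝ} (hX : Measurable X)
    (a b : ℝ) :
    IntervalIntegrable (fun y => dcap ν α {ω | y < X ω}) volume a b :=
  ((dcap_layer_antitone (α := α) hcap hX).antitoneOn _).intervalIntegrable

lemma dcap_univ (hcap : IsCapacity F ν) (hα0 : 0 ≤ α) :
    dcap ν α (Set.univ : Set Ω) = α := by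
  simp [dcap, hcap.2.1]
  linarith

lemma phi_mono (hcap : IsCapacity F ν) {X Z : Ω → ℝ} (hX : Measurable X)
    (hZ : Measurable Z) (hle : ∀ ω, X ω ≤ Z ω) {M : ℝ} (hM : 0 ≤ M) :
    phi ν α X M ≤ phi ν α Z M := by
  apply intervalIntegral.integral_mono_on (by linarith)
    (layer_intervalIntegrable hcap hX _ _) (layer_intervalIntegrable hcap hZ _ _)
  intro y _
  exact dcap_mono hcap (upSet_measurable hX y) (upSet_measurable hZ y)
    (fun ω h => lt_of_lt_of_le h (hle ω))

lemma phi_indep_aux (hcap : IsCapacity F ν) (hα0 : 0 ≤ α) (hα1 : α ≤ 1)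
    {X : Ω → ℝ} (hX : Measurable X) {M M' : ℝ} (h1 : ∀ ω, |X ω| < M)
    (hMM' : M ≤ M') :
    phi ν α X M' - α * M' = phi ν α X M - α * M := by
  have hM0 : 0 ≤ M := by
    by_contra h
    push_neg at h
    rcases isEmpty_or_nonempty Ω with hΩ | hΩ
    · have : (∅ : Set Ω) = Set.univ := by ext ω; exact hΩ.elim ω
      have h01 : (0:ℝ) = 1 := by rw [← hcap.1, this, hcap.2.1]
      norm_num at h01
    · obtain ⟨ω⟩ := hΩ
      have := h1 ω
      have := abs_nonneg (X ω)
      linarith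
  have key1 : ∫ y in (-M')..(-M), dcap ν α {ω | y < X ω} = α * (M' - M) := by
    rw [intervalIntegral.integral_congr (g := fun _ => α)]
    · rw [intervalIntegral.integral_const, smul_eq_mul]; ring
    · intro y hy
      rw [Set.uIcc_of_le (by linarith)] at hy
      have hyM : y ≤ -M := hy.2
      have : {ω | y < X ω} = Set.univ := by
        ext ω
        simp only [Set.mem_setOf_eq, Set.mem_univ, iff_true]
        have := (abs_lt.mp (h1 ω)).1
        linarith
      simp only [this]
      exact dcap_univ hcap hα0
  have key2 : ∫ y in M..M', dcap ν α {ω | y < X ω} = 0 := by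
    rw [intervalIntegral.integral_congr (g := fun _ => (0:ℝ))]
    · simp
    · intro y hy
      rw [Set.uIcc_of_le (by linarith)] at hy
      have hyM : M ≤ y := hy.1
      have : {ω | y < X ω} = ∅ := by
        ext ω
        simp only [Set.mem_setOf_eq, Set.mem_empty_iff_false, iff_false, not_lt]
        have := (abs_lt.mp (h1 ω)).2
        linarith
      simp only [this]
      exact dcap_empty hcap hα1
  have split1 : (∫ y in (-M')..(-M), dcap ν α {ω | y < X ω})
      + (∫ y in (-M)..M', dcap ν α {ω | y < X ω})
      = ∫ y in (-M')..M', dcap ν α {ω | y < X ω} :=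
    intervalIntegral.integral_add_adjacent_intervals
      (layer_intervalIntegrable hcap hX _ _) (layer_intervalIntegrable hcap hX _ _)
  have split2 : (∫ y in (-M)..M, dcap ν α {ω | y < X ω})
      + (∫ y in M..M', dcap ν α {ω | y < X ω})
      = ∫ y in (-M)..M', dcap ν α {ω | y < X ω} :=
    intervalIntegral.integral_add_adjacent_intervals
      (layer_intervalIntegrable hcap hX _ _) (layer_intervalIntegrable hcap hX _ _)
  unfold phi
  rw [← split1, ← split2, key1, key2]
  ring

lemma phi_indep (hcap : IsCapacity F ν) (hα0 : 0 ≤ α) (hα1 : α ≤ 1)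
    {X : Ω → ℝ} (hX : Measurable X) {M M' : ℝ} (h1 : ∀ ω, |X ω| < M)
    (h2 : ∀ ω, |X ω| < M') :
    phi ν α X M' - α * M' = phi ν α X M - α * M := by
  rcases le_total M M' with h | h
  · exact phi_indep_aux hcap hα0 hα1 hX h1 h
  · exact (phi_indep_aux hcap hα0 hα1 hX h2 h).symm

lemma phi_translate (hcap : IsCapacity F ν) (hα0 : 0 ≤ α) (hα1 : α ≤ 1)
    {W : Ω → ℝ} (hW : Measurable W) {M c : ℝ} (hc : 0 ≤ c) (hM : 0 ≤ M) :
    phi ν α (fun ω => W ω + c) M ≤ phi ν α W M + α * c := by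
  have hset : (fun y => dcap ν α {ω | y < W ω + c})
      = fun y => dcap ν α {ω | y - c < W ω} := by
    funext y
    congr 1
    ext ω
    simp only [Set.mem_setOf_eq]
    constructor <;> intro h <;> linarith
  unfold phi
  rw [hset]
  rw [intervalIntegral.integral_comp_sub_right (fun u => dcap ν α {ω | u < W ω}) c]
  have split1 : (∫ y in (-M - c)..(-M), dcap ν α {ω | y < W ω})
      + (∫ y in (-M)..(M - c), dcap ν α {ω | y < W ω})
      = ∫ y in (-M - c)..(M - c), dcap ν α {ω | y < W ω} :=
    intervalIntegral.integral_add_adjacent_intervals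
      (layer_intervalIntegrable hcap hW _ _) (layer_intervalIntegrable hcap hW _ _)
  have split2 : (∫ y in (-M)..(M - c), dcap ν α {ω | y < W ω})
      + (∫ y in (M - c)..M, dcap ν α {ω | y < W ω})
      = ∫ y in (-M)..M, dcap ν α {ω | y < W ω} :=
    intervalIntegral.integral_add_adjacent_intervals
      (layer_intervalIntegrable hcap hW _ _) (layer_intervalIntegrable hcap hW _ _)
  have b1 : (∫ y in (-M - c)..(-M), dcap ν α {ω | y < W ω}) ≤ α * c := by
    have : (∫ y in (-M - c)..(-M), dcap ν α {ω | y < W ω})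
        ≤ ∫ _ in (-M - c)..(-M), α := by
      apply intervalIntegral.integral_mono_on (by linarith)
        (layer_intervalIntegrable hcap hW _ _) intervalIntegrable_const
      intro y _
      exact dcap_le hcap hα0 (upSet_measurable hW y)
    rw [intervalIntegral.integral_const, smul_eq_mul] at this
    calc (∫ y in (-M - c)..(-M), dcap ν α {ω | y < W ω})
        ≤ (-M - (-M - c)) * α := this
      _ = α * c := by ring
  have b2 : 0 ≤ ∫ y in (M - c)..M, dcap ν α {ω | y < W ω} := by
    apply intervalIntegral.integral_nonneg (by linarith)
    intro y _
    exact dcap_nonneg _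
  linarith

end Phi


section Grid

variable {ν : Set Ω → ℝ} {α : ℝ}

lemma integral_const_of_Ico {f : ℝ → ℝ} {a b d : ℝ} (hab : a ≤ b)
    (hf : IntervalIntegrable f volume a b)
    (h : ∀ y ∈ Set.Ico a b, f y = d) : ∫ y in a..b, f y = d * (b - a) := by
  have hb : ∀ᵐ y : ℝ, y ≠ b := by
    rw [ae_iff]
    have : {y : ℝ | ¬y ≠ b} = {b} := by ext y; simp
    rw [this]
    exact Real.volume_singleton
  have congr : ∫ y in a..b, f y = ∫ y in a..b, (fun _ => d) y := by
    apply intervalIntegral.integral_congr_ae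
    filter_upwards [hb] with y hyb hy
    rw [Set.uIoc_of_le hab] at hy
    exact h y ⟨le_of_lt hy.1, lt_of_le_of_ne hy.2 hyb⟩
  rw [congr, intervalIntegral.integral_const, smul_eq_mul]
  ring

lemma cnt_real_measurable (L : List (Set Ω)) (hL : ∀ A ∈ L, MeasurableSet A) :
    Measurable (fun ω => (cnt L ω : ℝ)) :=
  measurable_from_top.comp (cnt_measurable L hL)

lemma phi_grid (hcap : IsCapacity F ν) (hα0 : 0 ≤ α) (hα1 : α ≤ 1)
    (L : List (Set Ω)) (hL : ∀ A ∈ L, MeasurableSet A)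
    {ε c Mz : ℝ} (hε : 0 < ε) (h1 : -Mz ≤ c) (h2 : c + ε * L.length ≤ Mz) :
    phi ν α (fun ω => c + ε * cnt L ω) Mz
      = α * (c + Mz) + ε * ∑ j ∈ Finset.range L.length,
          dcap ν α {ω | j + 1 ≤ cnt L ω} := by
  set Z : Ω → ℝ := fun ω => c + ε * cnt L ω with hZdef
  have hZ : Measurable Z :=
    measurable_const.add (measurable_const.mul (cnt_real_measurable L hL))
  set m := L.length with hm
  -- part A : from -Mz to c
  have partA : ∫ y in (-Mz)..c, dcap ν α {ω | y < Z ω} = α * (c + Mz) := by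
    have key := integral_const_of_Ico (d := α) h1
      (layer_intervalIntegrable hcap hZ _ _) (f := fun y => dcap ν α {ω | y < Z ω}) ?_
    · rw [key]; ring
    · intro y hy
      show dcap ν α {ω | y < Z ω} = α
      have : {ω | y < Z ω} = Set.univ := by
        ext ω
        simp only [Set.mem_setOf_eq, Set.mem_univ, iff_true, hZdef]
        have hn : (0:ℝ) ≤ ε * cnt L ω := by positivity
        have := hy.2
        linarith
      rw [this, dcap_univ hcap hα0]
  -- part B : each grid cell
  have partB : ∀ j : ℕ, j < m →
      ∫ y in (c + ε * (j:ℝ))..(c + ε * ((j+1 : ℕ):ℝ)), dcap ν α {ω | y < Z ω}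
        = dcap ν α {ω | j + 1 ≤ cnt L ω} * ε := by
    intro j hj
    have hab : c + ε * (j:ℝ) ≤ c + ε * ((j+1 : ℕ):ℝ) := by push_cast; nlinarith
    have key := integral_const_of_Ico (d := dcap ν α {ω | j + 1 ≤ cnt L ω}) hab
      (layer_intervalIntegrable hcap hZ _ _) (f := fun y => dcap ν α {ω | y < Z ω}) ?_
    · rw [key]; push_cast; ring
    · intro y hy
      show dcap ν α {ω | y < Z ω} = dcap ν α {ω | j + 1 ≤ cnt L ω}
      congr 1
      ext ω
      simp only [Set.mem_setOf_eq, hZdef]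
      constructor
      · intro h
        by_contra hcon
        push_neg at hcon
        have hle : (cnt L ω : ℝ) ≤ j := by exact_mod_cast Nat.lt_succ_iff.mp hcon
        have : c + ε * cnt L ω ≤ c + ε * j := by nlinarith
        linarith [hy.1]
      · intro h
        have hge : (j:ℝ) + 1 ≤ cnt L ω := by exact_mod_cast h
        have : c + ε * ((j:ℝ) + 1) ≤ c + ε * cnt L ω := by nlinarith
        have hy2 : y < c + ε * ((j:ℝ) + 1) := by
          have := hy.2; push_cast at this; linarith
        linarith
  -- part C : sum the cells
  have partC : ∫ y in c..(c + ε * m), dcap ν α {ω | y < Z ω}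
      = ε * ∑ j ∈ Finset.range m, dcap ν α {ω | j + 1 ≤ cnt L ω} := by
    have := intervalIntegral.sum_integral_adjacent_intervals
      (a := fun j : ℕ => c + ε * j) (n := m)
      (fun k _ => layer_intervalIntegrable hcap hZ _ _)
      (f := fun y => dcap ν α {ω | y < Z ω}) (μ := volume)
    simp only [Nat.cast_zero, mul_zero, add_zero] at this
    rw [← this]
    rw [Finset.mul_sum]
    apply Finset.sum_congr rfl
    intro j hj
    rw [partB j (Finset.mem_range.mp hj)]
    ring
  -- part D : from c + ε m to Mz
  have partD : ∫ y in (c + ε * m)..Mz, dcap ν α {ω | y < Z ω} = 0 := by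
    rw [intervalIntegral.integral_congr (g := fun _ => (0:ℝ))]
    · simp
    · intro y hy
      rw [Set.uIcc_of_le h2] at hy
      have : {ω | y < Z ω} = ∅ := by
        ext ω
        simp only [Set.mem_setOf_eq, Set.mem_empty_iff_false, iff_false, not_lt, hZdef]
        have hcnt : (cnt L ω : ℝ) ≤ m := by exact_mod_cast cnt_le_length L ω
        have : c + ε * cnt L ω ≤ c + ε * m := by nlinarith
        linarith [hy.1]
      show dcap ν α {ω | y < Z ω} = 0
      rw [this, dcap_empty hcap hα1]
  -- combine
  have split1 : (∫ y in (-Mz)..c, dcap ν α {ω | y < Z ω})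
      + (∫ y in c..(c + ε * m), dcap ν α {ω | y < Z ω})
      = ∫ y in (-Mz)..(c + ε * m), dcap ν α {ω | y < Z ω} :=
    intervalIntegral.integral_add_adjacent_intervals
      (layer_intervalIntegrable hcap hZ _ _) (layer_intervalIntegrable hcap hZ _ _)
  have split2 : (∫ y in (-Mz)..(c + ε * m), dcap ν α {ω | y < Z ω})
      + (∫ y in (c + ε * m)..Mz, dcap ν α {ω | y < Z ω})
      = ∫ y in (-Mz)..Mz, dcap ν α {ω | y < Z ω} :=
    intervalIntegral.integral_add_adjacent_intervals
      (layer_intervalIntegrable hcap hZ _ _) (layer_intervalIntegrable hcap hZ _ _)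
  unfold phi
  rw [← split2, ← split1, partA, partC, partD]
  ring

end Grid


section Approx

variable {ν : Set Ω → ℝ} {α : ℝ}

lemma nonempty_of_capacity (hcap : IsCapacity F ν) : Nonempty Ω := by
  rcases isEmpty_or_nonempty Ω with hΩ | hΩ
  · exfalso
    have : (∅ : Set Ω) = Set.univ := by ext ω; exact hΩ.elim ω
    have h01 : (0:ℝ) = 1 := by rw [← hcap.1, this, hcap.2.1]
    norm_num at h01
  · exact hΩ

lemma cnt_range_eq (f : ℕ → Set Ω) (ω : Ω) :
    ∀ n N : ℕ, N ≤ n → (∀ k < n, ω ∈ f k ↔ k < N) →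
      cnt ((List.range n).map f) ω = N := by
  intro n
  induction n with
  | zero => intro N hN _; simp [cnt]; omega
  | succ n ih =>
      intro N hN hf
      rw [List.range_succ, List.map_append, cnt_append]
      by_cases hNn : N ≤ n
      · have h1 : cnt ((List.range n).map f) ω = N :=
          ih N hNn (fun k hk => hf k (by omega))
        have h2 : ω ∉ f n := by
          intro h
          have := (hf n (by omega)).mp h
          omega
        have h3 : cnt (List.map f [n]) ω = 0 := by simp [cnt, Set.indicator_of_notMem h2]
        rw [h1, h3]
        omega
      · have hNeq : N = n + 1 := by omega
        have h1 : cnt ((List.range n).map f) ω = n :=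
          ih n le_rfl (fun k hk => by
            rw [hf k (by omega)]
            constructor <;> intro <;> omega)
        have h2 : ω ∈ f n := (hf n (by omega)).mpr (by omega)
        have h3 : cnt (List.map f [n]) ω = 1 := by simp [cnt, Set.indicator_of_mem h2]
        rw [h1, h3, hNeq]

def gridList (X : Ω → ℝ) (M ε : ℝ) (n : ℕ) : List (Set Ω) :=
  (List.range n).map (fun k : ℕ => {ω | (k:ℝ) < (X ω + M) / ε})

lemma gridList_meas {X : Ω → ℝ} (hX : Measurable X) (M ε : ℝ) (n : ℕ) :
    ∀ A ∈ gridList X M ε n, MeasurableSet A := by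
  intro A hA
  rw [gridList, List.mem_map] at hA
  obtain ⟨k, -, rfl⟩ := hA
  exact measurableSet_lt measurable_const ((hX.add_const M).div_const ε)

lemma gridList_length (X : Ω → ℝ) (M ε : ℝ) (n : ℕ) :
    (gridList X M ε n).length = n := by rw [gridList, List.length_map, List.length_range]

lemma gridList_cnt {X : Ω → ℝ} {M ε : ℝ} {n : ℕ} (hε : 0 < ε)
    (hen : ε * n = 2 * M) (hXM : ∀ ω, |X ω| < M) (ω : Ω) :
    cnt (gridList X M ε n) ω = (⌈(X ω + M) / ε⌉).toNat := by
  set z := (X ω + M) / ε with hz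
  have hz0 : 0 < z := by
    apply div_pos _ hε
    have := (abs_lt.mp (hXM ω)).1
    linarith
  have hzn : z ≤ n := by
    rw [div_le_iff₀ hε]
    have h := (abs_lt.mp (hXM ω)).2
    have h2 : ε * (n:ℝ) = 2 * M := hen
    nlinarith
  have hceil0 : (0:ℤ) ≤ ⌈z⌉ := Int.ceil_nonneg (le_of_lt hz0)
  rw [gridList]
  refine cnt_range_eq _ ω n _ ?_ ?_
  · rw [Int.toNat_le]
    exact Int.ceil_le.mpr (by exact_mod_cast hzn)
  · intro k hk
    simp only [Set.mem_setOf_eq, ← hz]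
    constructor
    · intro h
      have h2 : ((k:ℕ):ℤ) < ⌈z⌉ := Int.lt_ceil.mpr (by push_cast; exact h)
      omega
    · intro h
      have h2 : ((k:ℕ):ℤ) < ⌈z⌉ := by omega
      have h3 := Int.lt_ceil.mp h2
      push_cast at h3
      exact h3

lemma gridList_bounds {X : Ω → ℝ} {M ε : ℝ} {n : ℕ} (hε : 0 < ε)
    (hen : ε * n = 2 * M) (hXM : ∀ ω, |X ω| < M) (ω : Ω) :
    X ω ≤ -M + ε * cnt (gridList X M ε n) ω ∧
      -M + ε * cnt (gridList X M ε n) ω ≤ X ω + ε := by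
  rw [gridList_cnt hε hen hXM ω]
  set z := (X ω + M) / ε with hz
  have hz0 : 0 ≤ z := by
    apply div_nonneg _ (le_of_lt hε)
    have := (abs_lt.mp (hXM ω)).1
    linarith
  have hcast : ((⌈z⌉.toNat : ℕ) : ℝ) = (⌈z⌉ : ℝ) := by
    exact_mod_cast congrArg (fun m : ℤ => (m : ℝ)) (Int.toNat_of_nonneg (Int.ceil_nonneg hz0))
  have h1 : z ≤ (⌈z⌉ : ℝ) := Int.le_ceil z
  have h2 : (⌈z⌉ : ℝ) < z + 1 := Int.ceil_lt_add_one z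
  have hez : ε * z = X ω + M := by
    rw [hz]; field_simp
  constructor
  · rw [hcast]
    nlinarith
  · rw [hcast]
    nlinarith

lemma list_range_map_sum (g : ℕ → ℝ) (n : ℕ) :
    ((List.range n).map g).sum = ∑ j ∈ Finset.range n, g j := by
  induction n with
  | zero => simp
  | succ n ih =>
      rw [List.range_succ, List.map_append, List.sum_append, Finset.sum_range_succ, ih]
      simp

lemma gridList_sum_eq {X : Ω → ℝ} {M ε : ℝ} {n : ℕ} (hε : 0 < ε)
    (hen : ε * n = 2 * M) (hXM : ∀ ω, |X ω| < M) :
    ((gridList X M ε n).map (dcap ν α)).sum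
      = ∑ j ∈ Finset.range n, dcap ν α {ω | j + 1 ≤ cnt (gridList X M ε n) ω} := by
  rw [gridList, List.map_map, list_range_map_sum]
  apply Finset.sum_congr rfl
  intro j hj
  rw [Finset.mem_range] at hj
  show dcap ν α {ω | (j:ℝ) < (X ω + M) / ε}
      = dcap ν α {ω | j + 1 ≤ cnt (gridList X M ε n) ω}
  congr 1
  ext ω
  simp only [Set.mem_setOf_eq]
  rw [gridList_cnt hε hen hXM ω]
  set z := (X ω + M) / ε with hz
  constructor
  · intro h
    have h2 : ((j:ℕ):ℤ) < ⌈z⌉ := Int.lt_ceil.mpr (by push_cast; exact h)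
    omega
  · intro h
    have h2 : ((j:ℕ):ℤ) < ⌈z⌉ := by omega
    have h3 := Int.lt_ceil.mp h2
    push_cast at h3
    exact h3

end Approx


section Superadd

variable {ν : Set Ω → ℝ} {α : ℝ}

lemma phi_superadd (hcap : IsCapacity F ν) (hsm : Supermodular F ν)
    (hα0 : 0 ≤ α) (hα1 : α ≤ 1) {X Y : Ω → ℝ} (hX : Measurable X) (hY : Measurable Y)
    {MX MY MZ : ℝ} (hXM : ∀ ω, |X ω| < MX) (hYM : ∀ ω, |Y ω| < MY)
    (hZM : ∀ ω, |X ω + Y ω| < MZ) :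
    (phi ν α X MX - α * MX) + (phi ν α Y MY - α * MY)
      ≤ phi ν α (fun ω => X ω + Y ω) MZ - α * MZ := by
  obtain ⟨ω₀⟩ := nonempty_of_capacity hcap
  set M := max MX MY with hM
  have hXM' : ∀ ω, |X ω| < M := fun ω => lt_of_lt_of_le (hXM ω) (le_max_left _ _)
  have hYM' : ∀ ω, |Y ω| < M := fun ω => lt_of_lt_of_le (hYM ω) (le_max_right _ _)
  have hM0 : 0 < M := lt_of_le_of_lt (abs_nonneg (X ω₀)) (hXM' ω₀)
  have hZM' : ∀ ω, |X ω + Y ω| < 2 * M := by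
    intro ω
    calc |X ω + Y ω| ≤ |X ω| + |Y ω| := abs_add_le _ _
      _ < 2 * M := by linarith [hXM' ω, hYM' ω]
  have hZmeas : Measurable (fun ω => X ω + Y ω) := hX.add hY
  -- main estimate for each n
  have key : ∀ n : ℕ, 1 ≤ n →
      (phi ν α X M - α * M) + (phi ν α Y M - α * M)
        ≤ (phi ν α (fun ω => X ω + Y ω) (2*M) - α * (2*M)) + 4 * α * M / n := by
    intro n hn
    have hn0 : (0:ℝ) < n := by exact_mod_cast hn
    set ε := 2 * M / n with hεdef
    have hε : 0 < ε := by positivity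
    have hen : ε * n = 2 * M := by rw [hεdef]; field_simp
    set LX := gridList X M ε n with hLX
    set LY := gridList Y M ε n with hLY
    set LZ := LX ++ LY with hLZ
    have hLXm : ∀ A ∈ LX, MeasurableSet A := gridList_meas hX M ε n
    have hLYm : ∀ A ∈ LY, MeasurableSet A := gridList_meas hY M ε n
    have hLZm : ∀ A ∈ LZ, MeasurableSet A := by
      intro A hA
      rw [hLZ, List.mem_append] at hA
      rcases hA with h | h
      · exact hLXm A h
      · exact hLYm A h
    set Xn : Ω → ℝ := fun ω => -M + ε * cnt LX ω with hXn
    set Yn : Ω → ℝ := fun ω => -M + ε * cnt LY ω with hYn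
    set Zn : Ω → ℝ := fun ω => -(2*M) + ε * cnt LZ ω with hZn
    have hZnXY : ∀ ω, Zn ω = Xn ω + Yn ω := by
      intro ω
      simp only [hZn, hXn, hYn, hLZ, cnt_append]
      push_cast
      ring
    have hXnm : Measurable Xn :=
      measurable_const.add (measurable_const.mul (cnt_real_measurable LX hLXm))
    have hYnm : Measurable Yn :=
      measurable_const.add (measurable_const.mul (cnt_real_measurable LY hLYm))
    have hZnm : Measurable Zn :=
      measurable_const.add (measurable_const.mul (cnt_real_measurable LZ hLZm))
    -- step 1 : phi X M ≤ phi Xn M = ε * SX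
    have hXle : ∀ ω, X ω ≤ Xn ω := fun ω => (gridList_bounds hε hen hXM' ω).1
    have hYle : ∀ ω, Y ω ≤ Yn ω := fun ω => (gridList_bounds hε hen hYM' ω).1
    have hXup : ∀ ω, Xn ω ≤ X ω + ε := fun ω => (gridList_bounds hε hen hXM' ω).2
    have hYup : ∀ ω, Yn ω ≤ Y ω + ε := fun ω => (gridList_bounds hε hen hYM' ω).2
    have gridX : phi ν α Xn M = α * (-M + M)
        + ε * ∑ j ∈ Finset.range LX.length, dcap ν α {ω | j + 1 ≤ cnt LX ω} := by
      have := phi_grid (ν := ν) (α := α) hcap hα0 hα1 LX hLXm hε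
        (c := -M) (Mz := M) (by linarith)
        (by rw [hLX, gridList_length]; rw [hen]; linarith)
      exact this
    have gridY : phi ν α Yn M = α * (-M + M)
        + ε * ∑ j ∈ Finset.range LY.length, dcap ν α {ω | j + 1 ≤ cnt LY ω} := by
      exact phi_grid hcap hα0 hα1 LY hLYm hε (by linarith)
        (by rw [hLY, gridList_length]; rw [hen]; linarith)
    have gridZ : phi ν α Zn (2*M) = α * (-(2*M) + 2*M)
        + ε * ∑ j ∈ Finset.range LZ.length, dcap ν α {ω | j + 1 ≤ cnt LZ ω} := by
      apply phi_grid hcap hα0 hα1 LZ hLZm hε (by linarith)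
      rw [hLZ, List.length_append, hLX, hLY, gridList_length, gridList_length]
      push_cast
      nlinarith [hen]
    -- chain inequality
    have hchain := chain_ineq (dcap ν α) (dcap_empty hcap hα1)
      (fun A B hA hB => dcap_supermodular hcap hsm hA hB) LZ hLZm
    have hsplit : (LZ.map (dcap ν α)).sum
        = (LX.map (dcap ν α)).sum + (LY.map (dcap ν α)).sum := by
      rw [hLZ, List.map_append, List.sum_append]
    have hsumX : (LX.map (dcap ν α)).sum
        = ∑ j ∈ Finset.range LX.length, dcap ν α {ω | j + 1 ≤ cnt LX ω} := by
      rw [hLX, gridList_length]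
      exact gridList_sum_eq hε hen hXM'
    have hsumY : (LY.map (dcap ν α)).sum
        = ∑ j ∈ Finset.range LY.length, dcap ν α {ω | j + 1 ≤ cnt LY ω} := by
      rw [hLY, gridList_length]
      exact gridList_sum_eq hε hen hYM'
    -- monotonicity chains
    have m1 : phi ν α X M ≤ phi ν α Xn M := phi_mono hcap hX hXnm hXle (le_of_lt hM0)
    have m2 : phi ν α Y M ≤ phi ν α Yn M := phi_mono hcap hY hYnm hYle (le_of_lt hM0)
    have m3 : phi ν α Zn (2*M) ≤ phi ν α (fun ω => (X ω + Y ω) + (ε + ε)) (2*M) := by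
      apply phi_mono hcap hZnm (by fun_prop) _ (by linarith)
      intro ω
      rw [hZnXY ω]
      linarith [hXup ω, hYup ω]
    have m4 : phi ν α (fun ω => (X ω + Y ω) + (ε + ε)) (2*M)
        ≤ phi ν α (fun ω => X ω + Y ω) (2*M) + α * (ε + ε) :=
      phi_translate hcap hα0 hα1 hZmeas (by linarith) (by linarith)
    -- put it together
    have total : phi ν α X M + phi ν α Y M
        ≤ phi ν α (fun ω => X ω + Y ω) (2*M) + α * (ε + ε) := by
      have c1 : phi ν α X M + phi ν α Y M ≤ phi ν α Xn M + phi ν α Yn M := by linarith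
      have c2 : phi ν α Xn M + phi ν α Yn M ≤ phi ν α Zn (2*M) := by
        rw [gridX, gridY, gridZ]
        have : (LX.map (dcap ν α)).sum + (LY.map (dcap ν α)).sum
            ≤ ∑ j ∈ Finset.range LZ.length, dcap ν α {ω | j + 1 ≤ cnt LZ ω} := by
          rw [← hsplit]; exact hchain
        rw [hsumX, hsumY] at this
        nlinarith [hε]
      linarith
    have hεε : α * (ε + ε) = 4 * α * M / n := by
      rw [hεdef]; field_simp; ring
    linarith [total, hεε.le, hεε.ge]
  -- pass to the limit
  have lim : (phi ν α X M - α * M) + (phi ν α Y M - α * M)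
      ≤ phi ν α (fun ω => X ω + Y ω) (2*M) - α * (2*M) := by
    set LHS := (phi ν α X M - α * M) + (phi ν α Y M - α * M)
    set R := phi ν α (fun ω => X ω + Y ω) (2*M) - α * (2*M)
    have htend : Tendsto (fun n : ℕ => R + 4 * α * M / n) atTop (nhds (R + 0)) :=
      tendsto_const_nhds.add (tendsto_const_div_atTop_nhds_zero_nat _)
    rw [add_zero] at htend
    apply ge_of_tendsto htend
    filter_upwards [eventually_ge_atTop 1] with n hn
    exact key n hn
  have e1 : phi ν α X M - α * M = phi ν α X MX - α * MX :=
    phi_indep hcap hα0 hα1 hX hXM hXM'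
  have e2 : phi ν α Y M - α * M = phi ν α Y MY - α * MY :=
    phi_indep hcap hα0 hα1 hY hYM hYM'
  have e3 : phi ν α (fun ω => X ω + Y ω) (2*M) - α * (2*M)
      = phi ν α (fun ω => X ω + Y ω) MZ - α * MZ :=
    phi_indep hcap hα0 hα1 hZmeas hZM hZM'
  rw [← e1, ← e2, ← e3]
  exact lim

end Superadd


section LayerCake

variable {ν : Set Ω → ℝ} {α : ℝ}

lemma ofReal_max0 (x : ℝ) : ENNReal.ofReal (max x 0) = ENNReal.ofReal x := by
  rcases le_total x 0 with h | h
  · rw [max_eq_right h, ENNReal.ofReal_of_nonpos h, ENNReal.ofReal_zero]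
  · rw [max_eq_left h]

lemma quantile_integral_eq (hcap : IsCapacity F ν) (hα0 : 0 < α) (hα1 : α ≤ 1)
    {X : Ω → ℝ} (hX : Measurable X) {M : ℝ} (hXM : ∀ ω, |X ω| < M) :
    ∫ β in (0:ℝ)..α, capQuantile ν X β = phi ν α X M - α * M := by
  obtain ⟨ω₀⟩ := nonempty_of_capacity hcap
  have hM0 : 0 < M := lt_of_le_of_lt (abs_nonneg (X ω₀)) (hXM ω₀)
  set G : ℝ → ℝ := fun y => ν {ω | y < X ω} with hG
  have hGmeas : ∀ y, MeasurableSet {ω | y < X ω} := upSet_measurable hX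
  have hGanti : ∀ x y : ℝ, x ≤ y → G y ≤ G x := by
    intro x y hxy
    exact hcap.2.2 _ _ (hGmeas y) (hGmeas x) (fun ω h => lt_of_le_of_lt hxy h)
  have hG01 : ∀ y, 0 ≤ G y ∧ G y ≤ 1 :=
    fun y => ⟨nu_nonneg hcap (hGmeas y), nu_le_one hcap (hGmeas y)⟩
  have hGtop : ∀ y, M ≤ y → G y = 0 := by
    intro y hy
    have : {ω | y < X ω} = ∅ := by
      ext ω
      simp only [Set.mem_setOf_eq, Set.mem_empty_iff_false, iff_false, not_lt]
      have := (abs_lt.mp (hXM ω)).2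
      linarith
    rw [hG]; simp only [this]; exact hcap.1
  have hGbot : ∀ y, y < -M → G y = 1 := by
    intro y hy
    have : {ω | y < X ω} = Set.univ := by
      ext ω
      simp only [Set.mem_setOf_eq, Set.mem_univ, iff_true]
      have := (abs_lt.mp (hXM ω)).1
      linarith
    rw [hG]; simp only [this]; exact hcap.2.1
  -- basic facts about the quantile on [0,1)
  have hSdef : ∀ β : ℝ, capQuantile ν X β = sInf {x : ℝ | G x < 1 - β} := fun β => rfl
  have hSne : ∀ β : ℝ, β < 1 → M ∈ {x : ℝ | G x < 1 - β} := by
    intro β hβ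
    simp only [Set.mem_setOf_eq]
    rw [hGtop M le_rfl]
    linarith
  have hSbdd : ∀ β : ℝ, 0 ≤ β → ∀ x ∈ {x : ℝ | G x < 1 - β}, -M ≤ x := by
    intro β hβ x hx
    by_contra hcon
    push_neg at hcon
    rw [Set.mem_setOf_eq, hGbot x hcon] at hx
    linarith
  have hq_le : ∀ β : ℝ, 0 ≤ β → β < 1 → capQuantile ν X β ≤ M := by
    intro β h0 h1
    rw [hSdef]
    exact csInf_le ⟨-M, hSbdd β h0⟩ (hSne β h1)
  have hq_ge : ∀ β : ℝ, 0 ≤ β → β < 1 → -M ≤ capQuantile ν X β := by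
    intro β h0 h1
    rw [hSdef]
    exact le_csInf ⟨M, hSne β h1⟩ (hSbdd β h0)
  have hq_mono : ∀ β₁ β₂ : ℝ, 0 ≤ β₁ → β₁ ≤ β₂ → β₂ < 1 →
      capQuantile ν X β₁ ≤ capQuantile ν X β₂ := by
    intro β₁ β₂ h0 h12 h21
    rw [hSdef, hSdef]
    apply csInf_le_csInf ⟨-M, hSbdd β₁ h0⟩ ⟨M, hSne β₂ h21⟩
    intro x hx
    rw [Set.mem_setOf_eq] at hx ⊢
    linarith
  -- globally monotone modification
  set qg : ℝ → ℝ := fun β => if β < 1 then capQuantile ν X (max β 0) else M with hqg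
  have hqg_mono : Monotone qg := by
    intro β₁ β₂ h12
    rw [hqg]
    by_cases h1 : β₁ < 1 <;> by_cases h2 : β₂ < 1 <;> simp only [h1, h2, if_true, if_false]
    · exact hq_mono _ _ (le_max_right _ _) (max_le_max h12 le_rfl) (by
        rw [max_lt_iff]; exact ⟨h2, by linarith⟩)
    · exact hq_le _ (le_max_right _ _) (by rw [max_lt_iff]; exact ⟨h1, by linarith⟩)
    · linarith
    · exact le_rfl
  have hqg_meas : Measurable qg := hqg_mono.measurable
  have hqg_le : ∀ β, qg β ≤ M := by
    intro β
    rw [hqg]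
    by_cases h : β < 1 <;> simp only [h, if_true, if_false]
    · exact hq_le _ (le_max_right _ _) (by rw [max_lt_iff]; exact ⟨h, by linarith⟩)
    · exact le_rfl
  have hqg_ge : ∀ β, -M ≤ qg β := by
    intro β
    rw [hqg]
    by_cases h : β < 1 <;> simp only [h, if_true, if_false]
    · exact hq_ge _ (le_max_right _ _) (by rw [max_lt_iff]; exact ⟨h, by linarith⟩)
    · linarith
  -- step 1 : replace the integrand
  have step1 : ∫ β in (0:ℝ)..α, capQuantile ν X β = ∫ β in (0:ℝ)..α, qg β := by
    apply intervalIntegral.integral_congr_ae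
    have h1 : ∀ᵐ β : ℝ, β ≠ 1 := by
      rw [ae_iff]
      have : {β : ℝ | ¬β ≠ 1} = {1} := by ext β; simp
      rw [this]
      exact Real.volume_singleton
    filter_upwards [h1] with β hβ1 hβ
    rw [Set.uIoc_of_le (le_of_lt hα0)] at hβ
    have hβlt1 : β < 1 := lt_of_le_of_ne (le_trans hβ.2 hα1) hβ1
    rw [hqg]
    simp only [hβlt1, if_true]
    rw [max_eq_left (le_of_lt hβ.1)]
  -- the target layer function
  set w : ℝ → ℝ := fun t => dcap ν α {ω | t - M < X ω} with hw
  have hwshift : w = fun t => (fun u => dcap ν α {ω | u < X ω}) (t - M) := rfl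
  have hw_eq : ∀ t, w t = max (G (t - M) - (1 - α)) 0 := fun t => rfl
  have hw_anti : Antitone w := by
    intro t₁ t₂ h12
    exact dcap_mono hcap (hGmeas _) (hGmeas _)
      (fun ω h => by simp only [Set.mem_setOf_eq] at h ⊢; linarith)
  have hw_meas : Measurable w := hw_anti.measurable
  have hw_nonneg : ∀ t, 0 ≤ w t := fun t => dcap_nonneg _
  have hw_le : ∀ t, w t ≤ α := fun t => dcap_le hcap (le_of_lt hα0) (hGmeas _)
  have hw_zero : ∀ t, 2*M ≤ t → w t = 0 := by
    intro t ht
    rw [hw_eq, hGtop (t - M) (by linarith)]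
    rw [max_eq_right (by linarith)]
  -- the restricted measure and the shifted nonnegative function
  set ρ : Measure ℝ := volume.restrict (Set.Ioc 0 α) with hρ
  set g : ℝ → ℝ := fun β => qg β + M with hgdef
  have hg_meas : Measurable g := hqg_meas.add_const M
  have hg_nn : 0 ≤ᵐ[ρ] g := Eventually.of_forall (fun β => by
    have := hqg_ge β; show (0:ℝ) ≤ qg β + M; linarith)
  have hg_le : ∀ β, g β ≤ 2*M := fun β => by
    have := hqg_le β; show qg β + M ≤ 2*M; linarith
  -- sandwich inequalities
  have sandwich1 : ∀ t : ℝ, 0 < t → ρ {β | t < g β} ≤ ENNReal.ofReal (w t) := by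
    intro t ht
    rw [hρ, Measure.restrict_apply (measurableSet_lt measurable_const hg_meas)]
    have hsub : {β | t < g β} ∩ Set.Ioc 0 α ⊆ Set.Icc (1 - G (t - M)) α := by
      rintro β ⟨hβ1, hβ2⟩
      rw [Set.mem_setOf_eq] at hβ1
      constructor
      · by_cases hβlt1 : β < 1
        · -- here qg β = capQuantile at β
          have hqβ : qg β = capQuantile ν X β := by
            rw [hqg]; simp only [hβlt1, if_true]; rw [max_eq_left (le_of_lt hβ2.1)]
          have hquant : t - M < capQuantile ν X β := by
            rw [← hqβ]; simp only [hgdef] at hβ1; linarith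
          have hnotmem : (t - M) ∉ {x : ℝ | G x < 1 - β} := by
            intro hmem
            have := csInf_le ⟨-M, hSbdd β (le_of_lt hβ2.1)⟩ hmem
            rw [← hSdef] at this
            linarith
          rw [Set.mem_setOf_eq, not_lt] at hnotmem
          linarith
        · have := (hG01 (t - M)).1
          push_neg at hβlt1
          linarith
      · exact hβ2.2
    calc volume ({β | t < g β} ∩ Set.Ioc 0 α) ≤ volume (Set.Icc (1 - G (t - M)) α) :=
          measure_mono hsub
      _ = ENNReal.ofReal (α - (1 - G (t - M))) := by rw [Real.volume_Icc]
      _ = ENNReal.ofReal (w t) := by rw [hw_eq, ofReal_max0]; ring_nf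
  have sandwich2 : ∀ t : ℝ, 0 < t → ENNReal.ofReal (w t) ≤ ρ {β | t ≤ g β} := by
    intro t ht
    by_cases ht2 : 2*M ≤ t
    · rw [hw_zero t ht2]
      simp
    · push_neg at ht2
      rw [hρ, Measure.restrict_apply (measurableSet_le measurable_const hg_meas)]
      have hsub : Set.Ioc (1 - G (t - M)) α ⊆ {β | t ≤ g β} ∩ Set.Ioc 0 α := by
        rintro β ⟨hβ1, hβ2⟩
        have hβ0 : 0 < β := lt_of_le_of_lt (by linarith [(hG01 (t - M)).2]) hβ1
        refine ⟨?_, hβ0, hβ2⟩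
        rw [Set.mem_setOf_eq, hgdef]
        by_cases hβlt1 : β < 1
        · have hqβ : qg β = capQuantile ν X β := by
            rw [hqg]; simp only [hβlt1, if_true]; rw [max_eq_left (le_of_lt hβ0)]
          have hyle : t - M ≤ capQuantile ν X β := by
            rw [hSdef]
            apply le_csInf ⟨M, hSne β hβlt1⟩
            intro x hx
            rw [Set.mem_setOf_eq] at hx
            by_contra hcon
            push_neg at hcon
            have := hGanti x (t - M) (le_of_lt hcon)
            linarith
          simp only [hqβ]
          linarith
        · push_neg at hβlt1
          have : qg β = M := by rw [hqg]; simp only [not_lt.mpr hβlt1, if_false]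
          simp only [this]
          linarith
      calc ENNReal.ofReal (w t) = ENNReal.ofReal (α - (1 - G (t - M))) := by
            rw [hw_eq, ofReal_max0]; ring_nf
        _ = volume (Set.Ioc (1 - G (t - M)) α) := by rw [Real.volume_Ioc]
        _ ≤ volume ({β | t ≤ g β} ∩ Set.Ioc 0 α) := measure_mono hsub
  -- layer cake
  have LC1 : ∫⁻ β, ENNReal.ofReal (g β) ∂ρ = ∫⁻ t in Set.Ioi 0, ρ {β | t < g β} :=
    lintegral_eq_lintegral_meas_lt ρ hg_nn hg_meas.aemeasurable
  have LC2 : ∫⁻ β, ENNReal.ofReal (g β) ∂ρ = ∫⁻ t in Set.Ioi 0, ρ {β | t ≤ g β} :=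
    lintegral_eq_lintegral_meas_le ρ hg_nn hg_meas.aemeasurable
  have keyL : ∫⁻ β, ENNReal.ofReal (g β) ∂ρ
      = ∫⁻ t in Set.Ioi 0, ENNReal.ofReal (w t) := by
    apply le_antisymm
    · rw [LC1]
      apply lintegral_mono_ae
      rw [ae_restrict_iff' measurableSet_Ioi]
      exact Eventually.of_forall (fun t ht => sandwich1 t ht)
    · rw [LC2]
      apply lintegral_mono_ae
      rw [ae_restrict_iff' measurableSet_Ioi]
      exact Eventually.of_forall (fun t ht => sandwich2 t ht)
  -- finiteness
  have hfinL : ∫⁻ β, ENNReal.ofReal (g β) ∂ρ ≠ ⊤ := by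
    have hb : ∫⁻ β, ENNReal.ofReal (g β) ∂ρ ≤ ENNReal.ofReal (2*M) * ρ Set.univ := by
      have : ∀ β, ENNReal.ofReal (g β) ≤ ENNReal.ofReal (2*M) :=
        fun β => ENNReal.ofReal_le_ofReal (hg_le β)
      calc ∫⁻ β, ENNReal.ofReal (g β) ∂ρ ≤ ∫⁻ _, ENNReal.ofReal (2*M) ∂ρ :=
            lintegral_mono this
        _ = ENNReal.ofReal (2*M) * ρ Set.univ := lintegral_const _
    apply ne_top_of_le_ne_top _ hb
    apply ENNReal.mul_ne_top ENNReal.ofReal_ne_top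
    rw [hρ, Measure.restrict_apply_univ, Real.volume_Ioc]
    exact ENNReal.ofReal_ne_top
  -- convert both sides to Bochner integrals
  have conv1 : ∫ β in (0:ℝ)..α, g β
      = (∫⁻ β, ENNReal.ofReal (g β) ∂ρ).toReal := by
    rw [intervalIntegral.integral_of_le (le_of_lt hα0), ← hρ]
    exact integral_eq_lintegral_of_nonneg_ae hg_nn hg_meas.aestronglyMeasurable
  have conv2 : ∫ t in Set.Ioi (0:ℝ), w t
      = (∫⁻ t in Set.Ioi 0, ENNReal.ofReal (w t)).toReal := by
    exact integral_eq_lintegral_of_nonneg_ae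
      (Eventually.of_forall (fun t => hw_nonneg t)) hw_meas.aestronglyMeasurable
  have main : ∫ β in (0:ℝ)..α, g β = ∫ t in Set.Ioi (0:ℝ), w t := by
    rw [conv1, conv2, keyL]
  -- compute ∫ w over Ioi 0
  have hw_intOn : IntegrableOn w (Set.Ioc 0 (2*M)) := by
    have := (layer_intervalIntegrable (α := α) hcap (hX.add_const M) 0 (2*M))
    have hcong : (fun y => dcap ν α {ω | y < X ω + M}) = w := by
      funext t
      rw [hw]
      congr 1
      ext ω
      simp only [Set.mem_setOf_eq]
      constructor <;> intro h <;> linarith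
    rw [hcong] at this
    exact this.1
  have hsplit : ∫ t in Set.Ioi (0:ℝ), w t = ∫ t in Set.Ioc (0:ℝ) (2*M), w t := by
    have hun : Set.Ioi (0:ℝ) = Set.Ioc 0 (2*M) ∪ Set.Ioi (2*M) := by
      rw [Set.Ioc_union_Ioi_eq_Ioi]; positivity
    rw [hun, setIntegral_union (Set.Ioc_disjoint_Ioi le_rfl) measurableSet_Ioi hw_intOn]
    · have : ∫ t in Set.Ioi (2*M), w t = 0 := by
        apply setIntegral_eq_zero_of_forall_eq_zero
        intro t ht
        exact hw_zero t (le_of_lt ht)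
      rw [this, add_zero]
    · apply (integrableOn_congr_fun _ measurableSet_Ioi).mpr (integrableOn_zero)
      intro t ht
      exact hw_zero t (le_of_lt ht)
  have hcomp : ∫ t in Set.Ioc (0:ℝ) (2*M), w t = phi ν α X M := by
    rw [← intervalIntegral.integral_of_le (by positivity : (0:ℝ) ≤ 2*M)]
    rw [hwshift]
    rw [intervalIntegral.integral_comp_sub_right (fun u => dcap ν α {ω | u < X ω}) M]
    have h1 : (0:ℝ) - M = -M := by ring
    have h2 : 2*M - M = M := by ring
    rw [h1, h2]
    rfl
  -- finish
  have hgsplit : ∫ β in (0:ℝ)..α, g β = (∫ β in (0:ℝ)..α, qg β) + α * M := by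
    rw [hgdef]
    rw [intervalIntegral.integral_add ((hqg_mono.monotoneOn _).intervalIntegrable)
      intervalIntegrable_const]
    rw [intervalIntegral.integral_const, smul_eq_mul]
    ring
  rw [step1]
  have := main
  rw [hgsplit, hsplit, hcomp] at this
  linarith

end LayerCake


section Homog

variable {ν : Set Ω → ℝ} {α : ℝ}

lemma phi_smul {l : ℝ} (hl : 0 < l) (X : Ω → ℝ) (M : ℝ) :
    phi ν α (fun ω => l * X ω) (l * M) = l * phi ν α X M := by
  have hset : (fun y => dcap ν α {ω | y < l * X ω})
      = fun y => (fun u => dcap ν α {ω | u < X ω}) (y / l) := by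
    funext y
    congr 1
    ext ω
    simp only [Set.mem_setOf_eq]
    rw [div_lt_iff₀' hl]
  unfold phi
  rw [hset, intervalIntegral.integral_comp_div (fun u => dcap ν α {ω | u < X ω}) (ne_of_gt hl)]
  rw [smul_eq_mul]
  congr 2 <;> (field_simp; try ring)

end Homog


section Forward

variable {ν : Set Ω → ℝ}

lemma forward (hcap : IsCapacity F ν) (hsm : Supermodular F ν)
    {X Y : Ω → ℝ} (hXb : BddMeas F X) (hYb : BddMeas F Y) {l : ℝ}
    (hl0 : 0 ≤ l) (hl1 : l ≤ 1) {α : ℝ} (hα0 : 0 < α) (hα1 : α ≤ 1) :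
    l * (∫ β in (0:ℝ)..α, capQuantile ν X β)
      + (1 - l) * (∫ β in (0:ℝ)..α, capQuantile ν Y β)
      ≤ ∫ β in (0:ℝ)..α, capQuantile ν (fun ω => l * X ω + (1 - l) * Y ω) β := by
  rcases eq_or_lt_of_le hl0 with heq0 | hlpos
  · -- l = 0
    have hfe : (fun ω => l * X ω + (1 - l) * Y ω) = Y := by
      funext ω; rw [← heq0]; ring
    rw [hfe, ← heq0]
    norm_num
  rcases eq_or_lt_of_le hl1 with heq1 | hllt
  · -- l = 1
    have hfe : (fun ω => l * X ω + (1 - l) * Y ω) = X := by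
      funext ω; rw [heq1]; ring
    rw [hfe, heq1]
    norm_num
  obtain ⟨hXm, M0, hM0b⟩ := hXb
  obtain ⟨hYm, M1, hM1b⟩ := hYb
  set MX := M0 + 1 with hMX
  set MY := M1 + 1 with hMY
  have hXM : ∀ ω, |X ω| < MX := fun ω => lt_of_le_of_lt (hM0b ω) (lt_add_one M0)
  have hYM : ∀ ω, |Y ω| < MY := fun ω => lt_of_le_of_lt (hM1b ω) (lt_add_one M1)
  have hl1pos : 0 < 1 - l := by linarith
  have hZm : Measurable (fun ω => l * X ω + (1 - l) * Y ω) :=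
    (hXm.const_mul l).add (hYm.const_mul (1 - l))
  have hX'M : ∀ ω, |l * X ω| < l * MX := by
    intro ω
    rw [abs_mul, abs_of_nonneg hl0]
    exact mul_lt_mul_of_pos_left (hXM ω) hlpos
  have hY'M : ∀ ω, |(1 - l) * Y ω| < (1 - l) * MY := by
    intro ω
    rw [abs_mul, abs_of_nonneg (le_of_lt hl1pos)]
    exact mul_lt_mul_of_pos_left (hYM ω) hl1pos
  have hZM : ∀ ω, |l * X ω + (1 - l) * Y ω| < l * MX + (1 - l) * MY := by
    intro ω
    calc |l * X ω + (1 - l) * Y ω| ≤ |l * X ω| + |(1 - l) * Y ω| := abs_add_le _ _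
      _ < l * MX + (1 - l) * MY := by linarith [hX'M ω, hY'M ω]
  have eX := quantile_integral_eq hcap hα0 hα1 hXm hXM
  have eY := quantile_integral_eq hcap hα0 hα1 hYm hYM
  have eZ := quantile_integral_eq hcap hα0 hα1 hZm hZM
  have hsup := phi_superadd (α := α) hcap hsm (le_of_lt hα0) hα1
    (hXm.const_mul l) (hYm.const_mul (1 - l)) hX'M hY'M hZM
  have hsup' : (phi ν α (fun ω => l * X ω) (l * MX) - α * (l * MX))
      + (phi ν α (fun ω => (1 - l) * Y ω) ((1 - l) * MY) - α * ((1 - l) * MY))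
      ≤ phi ν α (fun ω => l * X ω + (1 - l) * Y ω) (l * MX + (1 - l) * MY)
        - α * (l * MX + (1 - l) * MY) := hsup
  have hhX : phi ν α (fun ω => l * X ω) (l * MX) = l * phi ν α X MX :=
    phi_smul hlpos X MX
  have hhY : phi ν α (fun ω => (1 - l) * Y ω) ((1 - l) * MY)
      = (1 - l) * phi ν α Y MY := phi_smul hl1pos Y MY
  rw [eX, eY, eZ]
  rw [hhX, hhY] at hsup'
  nlinarith [hsup']

end Forward


section Backward

variable {ν : Set Ω → ℝ}

lemma ind_nonneg {A : Set Ω} (ω : Ω) : 0 ≤ ind A ω :=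
  Set.indicator_nonneg (fun _ _ => zero_le_one) ω

lemma ind_le_one {A : Set Ω} (ω : Ω) : ind A ω ≤ 1 := by
  by_cases h : ω ∈ A
  · rw [ind, Set.indicator_of_mem h]
  · rw [ind, Set.indicator_of_notMem h]; norm_num

lemma ind_mem {A : Set Ω} {ω : Ω} (h : ω ∈ A) : ind A ω = 1 :=
  Set.indicator_of_mem h _

lemma ind_not_mem {A : Set Ω} {ω : Ω} (h : ω ∉ A) : ind A ω = 0 :=
  Set.indicator_of_notMem h _

lemma bddMeas_ind {A : Set Ω} (hA : MeasurableSet A) : BddMeas F (ind A) := by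
  refine ⟨?_, 1, fun ω => ?_⟩
  · exact measurable_const.indicator hA
  · rw [abs_of_nonneg (ind_nonneg ω)]
    exact ind_le_one ω

lemma mono_step (c : ℝ) : Monotone (fun β : ℝ => if β < c then (0:ℝ) else 1) := by
  intro β₁ β₂ h
  by_cases h2 : β₂ < c
  · have h1 : β₁ < c := lt_of_le_of_lt h h2
    simp [h1, h2]
  · by_cases h1 : β₁ < c <;> simp [h1, h2]

lemma step_int {c : ℝ} (h0 : 0 ≤ c) (h1 : c ≤ 1) :
    ∫ β in (0:ℝ)..1, (if β < c then (0:ℝ) else 1) = 1 - c := by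
  have hint : ∀ a b : ℝ, IntervalIntegrable (fun β => if β < c then (0:ℝ) else 1) volume a b :=
    fun a b => ((mono_step c).monotoneOn _).intervalIntegrable
  have e1 : ∫ β in (0:ℝ)..c, (if β < c then (0:ℝ) else 1) = 0 := by
    have key := integral_const_of_Ico (d := (0:ℝ)) h0 (hint 0 c)
      (f := fun β => if β < c then (0:ℝ) else 1) ?_
    · rw [key]; ring
    · intro y hy
      show (if y < c then (0:ℝ) else 1) = 0
      rw [if_pos hy.2]
  have e2 : ∫ β in c..(1:ℝ), (if β < c then (0:ℝ) else 1) = 1 - c := by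
    rw [intervalIntegral.integral_congr (g := fun _ => (1:ℝ))]
    · rw [intervalIntegral.integral_const, smul_eq_mul]; ring
    · intro y hy
      rw [Set.uIcc_of_le h1] at hy
      show (if y < c then (0:ℝ) else 1) = 1
      rw [if_neg (not_lt.mpr hy.1)]
  have := intervalIntegral.integral_add_adjacent_intervals (hint 0 c) (hint c 1)
  rw [e1, e2] at this
  rw [← this]
  ring

lemma quantile_ind (hcap : IsCapacity F ν) {A : Set Ω} (hA : MeasurableSet A)
    {β : ℝ} (h0 : 0 < β) (h1 : β < 1) :
    capQuantile ν (ind A) β = if β < 1 - ν A then (0:ℝ) else 1 := by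
  have hνA0 := nu_nonneg hcap hA
  have hνA1 := nu_le_one hcap hA
  have hsetneg : ∀ x : ℝ, x < 0 → {ω | x < ind A ω} = Set.univ := by
    intro x hx
    ext ω
    simp only [Set.mem_setOf_eq, Set.mem_univ, iff_true]
    exact lt_of_lt_of_le hx (ind_nonneg ω)
  have hsetmid : ∀ x : ℝ, 0 ≤ x → x < 1 → {ω | x < ind A ω} = A := by
    intro x hx hx1
    ext ω
    simp only [Set.mem_setOf_eq]
    constructor
    · intro hlt
      by_contra h
      rw [ind_not_mem h] at hlt
      linarith
    · intro h
      rw [ind_mem h]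
      exact hx1
  have hsettop : ∀ x : ℝ, 1 ≤ x → {ω | x < ind A ω} = ∅ := by
    intro x hx
    ext ω
    simp only [Set.mem_setOf_eq, Set.mem_empty_iff_false, iff_false, not_lt]
    exact le_trans (ind_le_one ω) hx
  by_cases hν : β < 1 - ν A
  · rw [if_pos hν]
    have hS : {x : ℝ | ν {ω | x < ind A ω} < 1 - β} = Set.Ici 0 := by
      ext x
      simp only [Set.mem_setOf_eq, Set.mem_Ici]
      constructor
      · intro hx
        by_contra hneg
        push_neg at hneg
        rw [hsetneg x hneg, hcap.2.1] at hx
        linarith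
      · intro hx
        rcases lt_or_ge x 1 with hx1 | hx1
        · rw [hsetmid x hx hx1]; linarith
        · rw [hsettop x hx1, hcap.1]; linarith
    show sInf {x : ℝ | ν {ω | x < ind A ω} < 1 - β} = 0
    rw [hS]
    exact csInf_Ici
  · rw [if_neg hν]
    push_neg at hν
    have hS : {x : ℝ | ν {ω | x < ind A ω} < 1 - β} = Set.Ici 1 := by
      ext x
      simp only [Set.mem_setOf_eq, Set.mem_Ici]
      constructor
      · intro hx
        by_contra hneg
        push_neg at hneg
        rcases lt_or_ge x 0 with h | h
        · rw [hsetneg x h, hcap.2.1] at hx; linarith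
        · rw [hsetmid x h hneg] at hx; linarith
      · intro hx
        rw [hsettop x hx, hcap.1]
        linarith
    show sInf {x : ℝ | ν {ω | x < ind A ω} < 1 - β} = 1
    rw [hS]
    exact csInf_Ici

lemma quantile_mix (hcap : IsCapacity F ν) {A B : Set Ω} (hA : MeasurableSet A)
    (hB : MeasurableSet B) {β : ℝ} (h0 : 0 < β) (h1 : β < 1) :
    capQuantile ν (fun ω => (1/2 : ℝ) * ind A ω + (1/2 : ℝ) * ind B ω) β
      = (1/2 : ℝ) * (if β < 1 - ν (A ∪ B) then (0:ℝ) else 1)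
        + (1/2 : ℝ) * (if β < 1 - ν (A ∩ B) then (0:ℝ) else 1) := by
  set Z : Ω → ℝ := fun ω => (1/2 : ℝ) * ind A ω + (1/2 : ℝ) * ind B ω with hZ
  have hU : MeasurableSet (A ∪ B) := hA.union hB
  have hI : MeasurableSet (A ∩ B) := hA.inter hB
  have hiu : ν (A ∩ B) ≤ ν (A ∪ B) :=
    hcap.2.2 _ _ hI hU (Set.inter_subset_left.trans Set.subset_union_left)
  have hu0 := nu_nonneg hcap hU
  have hu1 := nu_le_one hcap hU
  have hi0 := nu_nonneg hcap hI
  have hi1 := nu_le_one hcap hI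
  have hZapp : ∀ ω, Z ω = (1/2:ℝ) * ind A ω + (1/2:ℝ) * ind B ω := fun ω => rfl
  have hz0 : ∀ ω, 0 ≤ Z ω := by
    intro ω
    have := ind_nonneg (A := A) ω
    have := ind_nonneg (A := B) ω
    rw [hZapp ω]
    linarith
  have hsetneg : ∀ x : ℝ, x < 0 → {ω | x < Z ω} = Set.univ := by
    intro x hx
    ext ω
    simp only [Set.mem_setOf_eq, Set.mem_univ, iff_true]
    exact lt_of_lt_of_le hx (hz0 ω)
  have hsetmid1 : ∀ x : ℝ, 0 ≤ x → x < 1/2 → {ω | x < Z ω} = A ∪ B := by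
    intro x hx hx1
    ext ω
    simp only [Set.mem_setOf_eq, Set.mem_union]
    rw [hZapp ω]
    constructor
    · intro hlt
      by_contra h
      push_neg at h
      rw [ind_not_mem h.1, ind_not_mem h.2] at hlt
      linarith
    · intro h
      have h1' := ind_nonneg (A := A) ω
      have h2' := ind_nonneg (A := B) ω
      rcases h with h | h
      · rw [ind_mem h]; linarith
      · rw [ind_mem (A := B) h]; linarith
  have hsetmid2 : ∀ x : ℝ, 1/2 ≤ x → x < 1 → {ω | x < Z ω} = A ∩ B := by
    intro x hx hx1
    ext ω
    simp only [Set.mem_setOf_eq, Set.mem_inter_iff]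
    rw [hZapp ω]
    constructor
    · intro hlt
      constructor
      · by_contra h
        rw [ind_not_mem h] at hlt
        have := ind_le_one (A := B) ω
        linarith
      · by_contra h
        rw [ind_not_mem (A := B) h] at hlt
        have := ind_le_one (A := A) ω
        linarith
    · rintro ⟨h1', h2'⟩
      rw [ind_mem h1', ind_mem (A := B) h2']
      linarith
  have hsettop : ∀ x : ℝ, 1 ≤ x → {ω | x < Z ω} = ∅ := by
    intro x hx
    ext ω
    simp only [Set.mem_setOf_eq, Set.mem_empty_iff_false, iff_false, not_lt]
    rw [hZapp ω]
    have := ind_le_one (A := A) ω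
    have := ind_le_one (A := B) ω
    linarith
  by_cases c1 : β < 1 - ν (A ∪ B)
  · have c1' : β < 1 - ν (A ∩ B) := by linarith
    rw [if_pos c1, if_pos c1']
    have hS : {x : ℝ | ν {ω | x < Z ω} < 1 - β} = Set.Ici 0 := by
      ext x
      simp only [Set.mem_setOf_eq, Set.mem_Ici]
      constructor
      · intro hx
        by_contra hneg
        push_neg at hneg
        rw [hsetneg x hneg, hcap.2.1] at hx
        linarith
      · intro hx
        rcases lt_or_ge x (1/2) with hx1 | hx1
        · rw [hsetmid1 x hx hx1]; linarith
        · rcases lt_or_ge x 1 with hx2 | hx2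
          · rw [hsetmid2 x hx1 hx2]; linarith
          · rw [hsettop x hx2, hcap.1]; linarith
    show sInf {x : ℝ | ν {ω | x < Z ω} < 1 - β} = _
    rw [hS, csInf_Ici]
    ring
  · by_cases c2 : β < 1 - ν (A ∩ B)
    · rw [if_neg c1, if_pos c2]
      push_neg at c1
      have hS : {x : ℝ | ν {ω | x < Z ω} < 1 - β} = Set.Ici (1/2) := by
        ext x
        simp only [Set.mem_setOf_eq, Set.mem_Ici]
        constructor
        · intro hx
          by_contra hneg
          push_neg at hneg
          rcases lt_or_ge x 0 with h | h
          · rw [hsetneg x h, hcap.2.1] at hx; linarith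
          · rw [hsetmid1 x h hneg] at hx; linarith
        · intro hx
          rcases lt_or_ge x 1 with hx2 | hx2
          · rw [hsetmid2 x hx hx2]; linarith
          · rw [hsettop x hx2, hcap.1]; linarith
      show sInf {x : ℝ | ν {ω | x < Z ω} < 1 - β} = _
      rw [hS, csInf_Ici]
      ring
    · rw [if_neg c1, if_neg c2]
      push_neg at c1 c2
      have hS : {x : ℝ | ν {ω | x < Z ω} < 1 - β} = Set.Ici 1 := by
        ext x
        simp only [Set.mem_setOf_eq, Set.mem_Ici]
        constructor
        · intro hx
          by_contra hneg
          push_neg at hneg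
          rcases lt_or_ge x 0 with h | h
          · rw [hsetneg x h, hcap.2.1] at hx; linarith
          · rcases lt_or_ge x (1/2) with h2 | h2
            · rw [hsetmid1 x h h2] at hx; linarith
            · rw [hsetmid2 x h2 hneg] at hx; linarith
        · intro hx
          rw [hsettop x hx, hcap.1]
          linarith
      show sInf {x : ℝ | ν {ω | x < Z ω} < 1 - β} = _
      rw [hS, csInf_Ici]
      ring

lemma ae_ne_one : ∀ᵐ β : ℝ, β ≠ 1 := by
  rw [ae_iff]
  have : {β : ℝ | ¬β ≠ 1} = {1} := by ext β; simp
  rw [this]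
  exact Real.volume_singleton

lemma integral_quantile_ind (hcap : IsCapacity F ν) {A : Set Ω} (hA : MeasurableSet A) :
    ∫ β in (0:ℝ)..1, capQuantile ν (ind A) β = ν A := by
  have hcongr : ∫ β in (0:ℝ)..1, capQuantile ν (ind A) β
      = ∫ β in (0:ℝ)..1, (if β < 1 - ν A then (0:ℝ) else 1) := by
    apply intervalIntegral.integral_congr_ae
    filter_upwards [ae_ne_one] with β hβ1 hβ
    rw [Set.uIoc_of_le (by norm_num : (0:ℝ) ≤ 1)] at hβ
    exact quantile_ind hcap hA hβ.1 (lt_of_le_of_ne hβ.2 hβ1)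
  rw [hcongr, step_int (by linarith [nu_le_one hcap hA]) (by linarith [nu_nonneg hcap hA])]
  ring

lemma integral_quantile_mix (hcap : IsCapacity F ν) {A B : Set Ω}
    (hA : MeasurableSet A) (hB : MeasurableSet B) :
    ∫ β in (0:ℝ)..1, capQuantile ν (fun ω => (1/2 : ℝ) * ind A ω + (1/2 : ℝ) * ind B ω) β
      = (1/2) * ν (A ∪ B) + (1/2) * ν (A ∩ B) := by
  have hU : MeasurableSet (A ∪ B) := hA.union hB
  have hI : MeasurableSet (A ∩ B) := hA.inter hB
  have hcongr : ∫ β in (0:ℝ)..1,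
        capQuantile ν (fun ω => (1/2 : ℝ) * ind A ω + (1/2 : ℝ) * ind B ω) β
      = ∫ β in (0:ℝ)..1, ((1/2 : ℝ) * (if β < 1 - ν (A ∪ B) then (0:ℝ) else 1)
          + (1/2 : ℝ) * (if β < 1 - ν (A ∩ B) then (0:ℝ) else 1)) := by
    apply intervalIntegral.integral_congr_ae
    filter_upwards [ae_ne_one] with β hβ1 hβ
    rw [Set.uIoc_of_le (by norm_num : (0:ℝ) ≤ 1)] at hβ
    exact quantile_mix hcap hA hB hβ.1 (lt_of_le_of_ne hβ.2 hβ1)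
  rw [hcongr]
  have hint1 : IntervalIntegrable
      (fun β => (1/2 : ℝ) * (if β < 1 - ν (A ∪ B) then (0:ℝ) else 1)) volume 0 1 :=
    (((mono_step (1 - ν (A ∪ B))).monotoneOn _).intervalIntegrable).const_mul _
  have hint2 : IntervalIntegrable
      (fun β => (1/2 : ℝ) * (if β < 1 - ν (A ∩ B) then (0:ℝ) else 1)) volume 0 1 :=
    (((mono_step (1 - ν (A ∩ B))).monotoneOn _).intervalIntegrable).const_mul _
  rw [intervalIntegral.integral_add hint1 hint2]
  rw [intervalIntegral.integral_const_mul, intervalIntegral.integral_const_mul]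
  rw [step_int (by linarith [nu_le_one hcap hU]) (by linarith [nu_nonneg hcap hU]),
    step_int (by linarith [nu_le_one hcap hI]) (by linarith [nu_nonneg hcap hI])]
  ring

lemma backward (hcap : IsCapacity F ν)
    (h : ∀ X Y : Ω → ℝ, BddMeas F X → BddMeas F Y → ∀ l : ℝ, 0 ≤ l → l ≤ 1 →
      ∀ α : ℝ, 0 < α → α ≤ 1 →
        l * (∫ β in (0:ℝ)..α, capQuantile ν X β) +
          (1 - l) * (∫ β in (0:ℝ)..α, capQuantile ν Y β) ≤
        ∫ β in (0:ℝ)..α, capQuantile ν (fun ω => l * X ω + (1 - l) * Y ω) β) :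
    Supermodular F ν := by
  intro A B hA hB
  have key := h (ind A) (ind B) (bddMeas_ind hA) (bddMeas_ind hB) (1/2)
    (by norm_num) (by norm_num) 1 one_pos le_rfl
  have hfe : (fun ω => (1/2 : ℝ) * ind A ω + (1 - 1/2) * ind B ω)
      = fun ω => (1/2 : ℝ) * ind A ω + (1/2 : ℝ) * ind B ω := by
    funext ω; norm_num
  rw [hfe] at key
  rw [integral_quantile_ind hcap hA, integral_quantile_ind hcap hB,
    integral_quantile_mix hcap hA hB] at key
  linarith

end Backward

end Stmt3Aux

/-- a continuous capacity is supermodular iff the associated Choquet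
act-to-distribution mapping is concave in the integrated-quantile (second-order
stochastic dominance) sense (Theorem `theo:SAA`). -/
theorem stmt3 {Ω : Type*} [F : MeasurableSpace Ω] (ν : Set Ω → ℝ)
    (hν : IsContinuousCapacity F ν) :
    Supermodular F ν ↔
    (∀ X Y : Ω → ℝ, BddMeas F X → BddMeas F Y → ∀ l : ℝ, 0 ≤ l → l ≤ 1 →
      ∀ α : ℝ, 0 < α → α ≤ 1 →
        l * (∫ β in (0:ℝ)..α, capQuantile ν X β) +
          (1 - l) * (∫ β in (0:ℝ)..α, capQuantile ν Y β) ≤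
        ∫ β in (0:ℝ)..α, capQuantile ν (fun ω => l * X ω + (1 - l) * Y ω) β) := by
  constructor
  · intro hsm X Y hXb hYb l hl0 hl1 α hα0 hα1
    exact Stmt3Aux.forward hν.1 hsm hXb hYb hl0 hl1 hα0 hα1
  · intro h
    exact Stmt3Aux.backward hν.1 h

end
end

section
/- For every statistic γ there exists a unique certainty-equivalent statistic γ' such that for all distributions Q, P: γ(Q) ≥ γ(P) if and only if γ'(Q) ≥ γ'(P). In particular, two certainty-equivalent statistics that induce the same total preorder on distributions are equal. -/
open MeasureTheory Filter Topology

noncomputable section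

lemma dirac_isDistribution (c : ℝ) : IsDistribution (Measure.dirac c) :=
  ⟨inferInstance, c, c, Measure.dirac_apply_of_mem (by simp)⟩

lemma fsd_dirac_left {Q : Measure ℝ} {a b : ℝ} (hQ : IsProbabilityMeasure Q)
    (h : Q (Set.Icc a b) = 1) : FSDle (Measure.dirac a) Q := by
  intro x
  by_cases hx : x < a
  · rw [Measure.dirac_apply_of_mem (show a ∈ Set.Ioi x from hx)]
    calc (1 : ENNReal) = Q (Set.Icc a b) := h.symm
      _ ≤ Q (Set.Ioi x) := measure_mono fun y hy => lt_of_lt_of_le hx hy.1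
  · rw [Measure.dirac_apply' _ measurableSet_Ioi,
      Set.indicator_of_notMem (by simpa using hx)]
    exact zero_le

lemma fsd_dirac_right {Q : Measure ℝ} {a b : ℝ} (hQ : IsProbabilityMeasure Q)
    (h : Q (Set.Icc a b) = 1) : FSDle Q (Measure.dirac b) := by
  intro x
  by_cases hx : x < b
  · rw [Measure.dirac_apply_of_mem (show b ∈ Set.Ioi x from hx)]
    exact prob_le_one
  · rw [Measure.dirac_apply' _ measurableSet_Ioi,
      Set.indicator_of_notMem (by simpa using hx)]
    have hc : Q (Set.Icc a b)ᶜ = 0 := by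
      rw [measure_compl measurableSet_Icc (measure_ne_top _ _), h, measure_univ, tsub_self]
    have : Q (Set.Ioi x) = 0 := by
      refine measure_mono_null ?_ hc
      intro y hy
      simp only [Set.mem_compl_iff, Set.mem_Icc, not_and, not_le]
      exact fun _ => lt_of_le_of_lt (not_lt.1 hx) hy
    simp [this]

lemma gmono (γ : Measure ℝ → ℝ) (hγ : IsStatistic γ) :
    StrictMono (fun c => γ (Measure.dirac c)) := by
  intro a b hab
  refine hγ.2.1 (Measure.dirac b) (Measure.dirac a) (dirac_isDistribution b)
    (dirac_isDistribution a) ?_ ?_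
  · exact fsd_dirac_left inferInstance
      (Measure.dirac_apply_of_mem (show b ∈ Set.Icc a b by simp [hab.le]))
  · exact MeasureTheory.dirac_ne_dirac hab.ne'

lemma gcont (γ : Measure ℝ → ℝ) (hγ : IsStatistic γ) :
    Continuous (fun c => γ (Measure.dirac c)) := by
  rw [continuous_iff_seqContinuous]
  intro u x hu
  obtain ⟨a, b, hab⟩ := bddBelow_bddAbove_iff_subset_Icc.1
    ⟨(isBounded_iff_bddBelow_bddAbove.1 (Metric.isBounded_range_of_tendsto u hu)).1,
     (isBounded_iff_bddBelow_bddAbove.1 (Metric.isBounded_range_of_tendsto u hu)).2⟩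
  refine hγ.2.2 (fun n => Measure.dirac (u n)) (Measure.dirac x)
    (fun n => dirac_isDistribution _) (dirac_isDistribution x)
    ⟨a, b, fun n => Measure.dirac_apply_of_mem (hab (Set.mem_range_self n))⟩ ?_
  intro f
  simpa [integral_dirac, Function.comp_def] using (f.continuous.tendsto x).comp hu

/-- for every statistic there is a unique certainty-equivalent
statistic inducing the same preorder on distributions; in particular two
certainty-equivalent statistics inducing the same preorder coincide
(Proposition `prop:riskfun`). -/
theorem stmt6 (γ : Measure ℝ → ℝ) (hγ : IsStatistic γ) :
    (∃ γ' : Measure ℝ → ℝ, IsCEStatistic γ' ∧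
      (∀ Q P : Measure ℝ, IsDistribution Q → IsDistribution P →
        (γ P ≤ γ Q ↔ γ' P ≤ γ' Q)) ∧
      (∀ γ'' : Measure ℝ → ℝ, IsCEStatistic γ'' →
        (∀ Q P : Measure ℝ, IsDistribution Q → IsDistribution P →
          (γ P ≤ γ Q ↔ γ'' P ≤ γ'' Q)) →
        ∀ Q : Measure ℝ, IsDistribution Q → γ'' Q = γ' Q)) ∧
    (∀ γ₁ γ₂ : Measure ℝ → ℝ, IsCEStatistic γ₁ → IsCEStatistic γ₂ →
      (∀ Q P : Measure ℝ, IsDistribution Q → IsDistribution P →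
        (γ₁ P ≤ γ₁ Q ↔ γ₂ P ≤ γ₂ Q)) →
      ∀ Q : Measure ℝ, IsDistribution Q → γ₁ Q = γ₂ Q) := by
  classical
  set g : ℝ → ℝ := fun c => γ (Measure.dirac c) with hgdef
  have hgm : StrictMono g := gmono γ hγ
  have hgc : Continuous g := gcont γ hγ
  have hex : ∀ Q : Measure ℝ, IsDistribution Q → ∃ c : ℝ, g c = γ Q := by
    intro Q hQ
    obtain ⟨hprob, a, b, hab⟩ := hQ
    have hble : a ≤ b := by
      by_contra h
      rw [Set.Icc_eq_empty h, measure_empty] at hab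
      exact one_ne_zero hab.symm
    have h1 : g a ≤ γ Q :=
      hγ.1 Q (Measure.dirac a) ⟨hprob, a, b, hab⟩ (dirac_isDistribution a)
        (fsd_dirac_left hprob hab)
    have h2 : γ Q ≤ g b :=
      hγ.1 (Measure.dirac b) Q (dirac_isDistribution b) ⟨hprob, a, b, hab⟩
        (fsd_dirac_right hprob hab)
    obtain ⟨c, -, hc⟩ := intermediate_value_Icc hble hgc.continuousOn ⟨h1, h2⟩
    exact ⟨c, hc⟩
  set γ' : Measure ℝ → ℝ :=
    fun Q => if h : ∃ c : ℝ, g c = γ Q then h.choose else 0 with hγ'def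
  have hspec : ∀ Q : Measure ℝ, IsDistribution Q → g (γ' Q) = γ Q := by
    intro Q hQ
    have h := hex Q hQ
    simp only [hγ'def, dif_pos h]
    exact h.choose_spec
  have hiff : ∀ Q P : Measure ℝ, IsDistribution Q → IsDistribution P →
      (γ P ≤ γ Q ↔ γ' P ≤ γ' Q) := by
    intro Q P hQ hP
    rw [← hspec Q hQ, ← hspec P hP, hgm.le_iff_le]
  have hCE : IsCEStatistic γ' := by
    refine ⟨⟨?_, ?_, ?_⟩, ?_⟩
    · intro Q P hQ hP hfsd
      exact (hiff Q P hQ hP).1 (hγ.1 Q P hQ hP hfsd)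
    · intro Q P hQ hP hfsd hne
      have := hγ.2.1 Q P hQ hP hfsd hne
      rw [← hspec Q hQ, ← hspec P hP] at this
      exact hgm.lt_iff_lt.1 this
    · intro Qn Q hQn hQ hbd hw
      have ht : Tendsto (fun n => γ (Qn n)) atTop (nhds (γ Q)) :=
        hγ.2.2 Qn Q hQn hQ hbd hw
      rw [← hspec Q hQ] at ht
      refine tendsto_order.2 ⟨?_, ?_⟩
      · intro a' ha'
        have : ∀ᶠ n in atTop, g a' < γ (Qn n) :=
          ht.eventually (eventually_gt_nhds (hgm ha'))
        refine this.mono fun n hn => ?_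
        rw [← hspec (Qn n) (hQn n)] at hn
        exact hgm.lt_iff_lt.1 hn
      · intro b' hb'
        have : ∀ᶠ n in atTop, γ (Qn n) < g b' :=
          ht.eventually (eventually_lt_nhds (hgm hb'))
        refine this.mono fun n hn => ?_
        rw [← hspec (Qn n) (hQn n)] at hn
        exact hgm.lt_iff_lt.1 hn
    · intro c
      have : g (γ' (Measure.dirac c)) = g c := hspec _ (dirac_isDistribution c)
      exact hgm.injective this
  have key : ∀ γ'' : Measure ℝ → ℝ, IsCEStatistic γ'' →
      (∀ Q P : Measure ℝ, IsDistribution Q → IsDistribution P →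
        (γ P ≤ γ Q ↔ γ'' P ≤ γ'' Q)) →
      ∀ Q : Measure ℝ, IsDistribution Q → γ'' Q = γ' Q := by
    intro γ'' hγ'' hiff'' Q hQ
    set c := γ' Q with hc
    have hgc' : γ (Measure.dirac c) = γ Q := hspec Q hQ
    have h1 : γ'' Q ≤ γ'' (Measure.dirac c) :=
      (hiff'' (Measure.dirac c) Q (dirac_isDistribution c) hQ).1 hgc'.ge
    have h2 : γ'' (Measure.dirac c) ≤ γ'' Q :=
      (hiff'' Q (Measure.dirac c) hQ (dirac_isDistribution c)).1 hgc'.le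
    have h3 := hγ''.2 c
    have : γ'' Q = γ'' (Measure.dirac c) := le_antisymm h1 h2
    rw [this, h3]
  refine ⟨⟨γ', hCE, hiff, key⟩, ?_⟩
  intro γ₁ γ₂ hγ₁ hγ₂ hiff12 Q hQ
  set c := γ₁ Q with hc
  have h0 : γ₁ (Measure.dirac c) = γ₁ Q := hγ₁.2 c
  have h1 : γ₂ Q ≤ γ₂ (Measure.dirac c) :=
    (hiff12 (Measure.dirac c) Q (dirac_isDistribution c) hQ).1 h0.ge
  have h2 : γ₂ (Measure.dirac c) ≤ γ₂ Q :=
    (hiff12 Q (Measure.dirac c) hQ (dirac_isDistribution c)).1 h0.le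
  have : γ₂ Q = γ₂ (Measure.dirac c) := le_antisymm h1 h2
  rw [this, hγ₂.2 c]


end
end

section
/- Let (Δ, Σ) be a measurable space and let ≿ be a total preorder on the set of bounded Σ-measurable functions η : Δ → ℝ satisfying: (M1) η ≥ ζ pointwise implies η ≿ ζ; (M2) for every η, the sets {c ∈ ℝ : η ≿ c} and {c ∈ ℝ : c ≿ η} are closed in ℝ, where a real c is identified with the constant function equal to c; (M3) for reals a > b, a ≻ b. Then there exists a function ρ from the bounded Σ-measurable functions to ℝ such that: ρ(η) ≥ ρ(ζ) whenever η ≥ ζ pointwise; ρ(a) > ρ(b) whenever a > b in ℝ; and for all η, ζ: η ≿ ζ ⇔ ρ(η) ≥ ρ(ζ). -/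
open MeasureTheory Filter Topology

noncomputable section

/-- numerical representation of a monotone continuous preference
over bounded measurable (model-based) acts (Proposition `prop:labelGood1`). -/
theorem stmt7 {Δ : Type*} [Sm : MeasurableSpace Δ] (pref : (Δ → ℝ) → (Δ → ℝ) → Prop)
    (htotal : ∀ η ζ : Δ → ℝ, BddMeas Sm η → BddMeas Sm ζ → pref η ζ ∨ pref ζ η)
    (htrans : ∀ η ζ ξ : Δ → ℝ, BddMeas Sm η → BddMeas Sm ζ → BddMeas Sm ξ →
      pref η ζ → pref ζ ξ → pref η ξ)
    (hM1 : ∀ η ζ : Δ → ℝ, BddMeas Sm η → BddMeas Sm ζ → (∀ s, ζ s ≤ η s) → pref η ζ)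
    (hM2 : ∀ η : Δ → ℝ, BddMeas Sm η →
      IsClosed {c : ℝ | pref η (fun _ => c)} ∧ IsClosed {c : ℝ | pref (fun _ => c) η})
    (hM3 : ∀ a b : ℝ, b < a →
      pref (fun _ => a) (fun _ => b) ∧ ¬ pref (fun _ => b) (fun _ => a)) :
    ∃ ρ : (Δ → ℝ) → ℝ,
      (∀ η ζ : Δ → ℝ, BddMeas Sm η → BddMeas Sm ζ → (∀ s, ζ s ≤ η s) → ρ ζ ≤ ρ η) ∧
      (∀ a b : ℝ, b < a → ρ (fun _ => (b : ℝ)) < ρ (fun _ => (a : ℝ))) ∧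
      (∀ η ζ : Δ → ℝ, BddMeas Sm η → BddMeas Sm ζ → (pref η ζ ↔ ρ ζ ≤ ρ η)) := by
  classical
  set ρ : (Δ → ℝ) → ℝ := fun η => sInf {c : ℝ | pref (fun _ => c) η} with hρ
  have hconst : ∀ a : ℝ, BddMeas Sm (fun _ => a) := fun a =>
    ⟨measurable_const, |a|, fun _ => le_refl _⟩
  have hequiv : ∀ η : Δ → ℝ, BddMeas Sm η →
      pref (fun _ => ρ η) η ∧ pref η (fun _ => ρ η) := by
    intro η hη
    obtain ⟨hmeas, M, hM⟩ := hη
    have hηB : BddMeas Sm η := ⟨hmeas, M, hM⟩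
    have hmem : M ∈ {c : ℝ | pref (fun _ => c) η} :=
      hM1 _ _ (hconst M) hηB (fun s => (abs_le.1 (hM s)).2)
    have hne : {c : ℝ | pref (fun _ => c) η}.Nonempty := ⟨M, hmem⟩
    have hlow : pref η (fun _ => -M) :=
      hM1 _ _ hηB (hconst (-M)) (fun s => (abs_le.1 (hM s)).1)
    have hbdd : BddBelow {c : ℝ | pref (fun _ => c) η} := by
      refine ⟨-M, fun c hc => ?_⟩
      by_contra h
      push_neg at h
      exact (hM3 (-M) c h).2 (htrans _ _ _ (hconst c) hηB (hconst (-M)) hc hlow)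
    have h1 : pref (fun _ => ρ η) η := (hM2 η hηB).2.csInf_mem hne hbdd
    refine ⟨h1, ?_⟩
    have hsub : Set.Iio (ρ η) ⊆ {c : ℝ | pref η (fun _ => c)} := by
      intro c hc
      have hnot : c ∉ {c : ℝ | pref (fun _ => c) η} := fun hmem' =>
        not_lt.2 (csInf_le hbdd hmem') hc
      rcases htotal η (fun _ => c) hηB (hconst c) with h | h
      · exact h
      · exact absurd h hnot
    have hmc : ρ η ∈ closure (Set.Iio (ρ η)) := by
      rw [closure_Iio]; exact Set.self_mem_Iic
    have hcl := closure_mono hsub hmc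
    rwa [(hM2 η hηB).1.closure_eq] at hcl
  have hrep : ∀ η ζ : Δ → ℝ, BddMeas Sm η → BddMeas Sm ζ →
      (pref η ζ ↔ ρ ζ ≤ ρ η) := by
    intro η ζ hη hζ
    constructor
    · intro h
      by_contra hlt
      push_neg at hlt
      have hchain : pref (fun _ => ρ η) (fun _ => ρ ζ) :=
        htrans _ _ _ (hconst _) hζ (hconst _)
          (htrans _ _ _ (hconst _) hη hζ (hequiv η hη).1 h) (hequiv ζ hζ).2
      exact (hM3 (ρ ζ) (ρ η) hlt).2 hchain
    · intro h
      have h1 : pref (fun _ => ρ η) (fun _ => ρ ζ) :=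
        hM1 _ _ (hconst _) (hconst _) (fun _ => h)
      exact htrans _ _ _ hη (hconst _) hζ
        (htrans _ _ _ hη (hconst _) (hconst _) (hequiv η hη).2 h1)
        (hequiv ζ hζ).1
  refine ⟨ρ, ?_, ?_, hrep⟩
  · intro η ζ hη hζ hle
    exact (hrep η ζ hη hζ).1 (hM1 η ζ hη hζ hle)
  · intro a b hba
    have h1 : ρ (fun _ => b) ≤ ρ (fun _ => a) :=
      (hrep _ _ (hconst a) (hconst b)).1 (hM3 a b hba).1
    have h2 : ¬ ρ (fun _ => a) ≤ ρ (fun _ => b) := fun hc =>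
      (hM3 a b hba).2 ((hrep _ _ (hconst b) (hconst a)).2 hc)
    exact lt_of_le_not_ge h1 h2

end
end
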